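/- arXiv:1303.5464 — 2 statements merged into one kernel-verified Lean document; each statement's English description precedes it below -/
import Mathlib

section
/- For any positive integer b, real c, and w ≠ 0, z ≠ 0, the regularized Φ̃₃ function can be reduced to first-parameter one via Φ̃₃(b,c;w,z) = (z/w)^{b−1} Σ_{i=0}^{2(b−1)} z^{−i} · A_i(b,c;z) · Φ̃₃(1,c−i;w,z), where A_i(b,c;z) = ((−1)^{b−1}/(b−1)!) Σ_{k=0}^{⌊i/2⌋} (−1)^k (b−i+k)_{i−k} (c−i−1+k)_{i−2k} z^k / ((i−2k)! k!). -/
open scoped BigOperators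
open MeasureTheory

/-- Term of the double series defining the regularized Φ̃₃ function. -/
noncomputable def phi3Term (b c w z : ℝ) (k m : ℕ) : ℝ :=
  Polynomial.eval b (ascPochhammer ℝ k) * (Real.Gamma (c + k + m))⁻¹ *
    w ^ k * z ^ m / (Nat.factorial k * Nat.factorial m)

/-- The regularized confluent hypergeometric function of two variables Φ̃₃. -/
noncomputable def Phi3 (b c w z : ℝ) : ℝ :=
  ∑' k : ℕ, ∑' m : ℕ, phi3Term b c w z k m

/-- Modified Bessel function of the first kind of integer order (I₋ₙ = Iₙ). -/
noncomputable def besselI (n : ℤ) (x : ℝ) : ℝ :=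
  ∑' m : ℕ, (x / 2) ^ (2 * m + n.natAbs) /
    (Nat.factorial m * Nat.factorial (m + n.natAbs))

/-- Modified Bessel function of the first kind of real order. -/
noncomputable def besselIR (ν x : ℝ) : ℝ :=
  ∑' m : ℕ, (x / 2) ^ ((2 * m : ℝ) + ν) * (Real.Gamma ((m : ℝ) + ν + 1))⁻¹ /
    Nat.factorial m

/-- Generalized Marcum-Q function of integer order. -/
noncomputable def marcumQ (m : ℤ) (a b : ℝ) : ℝ :=
  ∫ x in Set.Ioi b,
    x ^ m / a ^ (m - 1) * Real.exp (-(a ^ 2 + x ^ 2) / 2) * besselI (m - 1) (a * x)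

/-- Generalized Marcum-Q function of real order. -/
noncomputable def marcumQR (m a b : ℝ) : ℝ :=
  ∫ x in Set.Ioi b,
    x ^ m / a ^ (m - 1) * Real.exp (-(a ^ 2 + x ^ 2) / 2) * besselIR (m - 1) (a * x)

/-- The polynomials A_i(b,c;z) in the Φ̃₃ reduction formula. -/
noncomputable def Acoef (b : ℕ) (c z : ℝ) (i : ℕ) : ℝ :=
  ((-1 : ℝ) ^ (b - 1) / Nat.factorial (b - 1)) *
    ∑ k ∈ Finset.range (i / 2 + 1),
      (-1 : ℝ) ^ k * Polynomial.eval ((b : ℝ) - i + k) (ascPochhammer ℝ (i - k)) *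
        Polynomial.eval (c - i - 1 + k) (ascPochhammer ℝ (i - 2 * k)) * z ^ k /
        (Nat.factorial (i - 2 * k) * Nat.factorial k)


lemma abs_ascPochhammer_eval_le (b : ℝ) (k : ℕ) :
    |Polynomial.eval b (ascPochhammer ℝ k)| ≤ (|b| + 1) ^ k * Nat.factorial k := by
  induction k with
  | zero => simp
  | succ k ih =>
    rw [ascPochhammer_succ_eval, abs_mul]
    have h1 : |b + (k : ℝ)| ≤ (|b| + 1) * ((k : ℝ) + 1) := by
      refine (abs_add_le _ _).trans ?_
      rw [Nat.abs_cast]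
      nlinarith [abs_nonneg b, Nat.cast_nonneg (α := ℝ) k]
    calc |Polynomial.eval b (ascPochhammer ℝ k)| * |b + (k : ℝ)|
        ≤ ((|b| + 1) ^ k * Nat.factorial k) * ((|b| + 1) * ((k : ℝ) + 1)) :=
          mul_le_mul ih h1 (abs_nonneg _) (by positivity)
      _ = (|b| + 1) ^ (k + 1) * Nat.factorial (k + 1) := by
          push_cast [Nat.factorial_succ]; ring

lemma gamma_lower_aux (x M : ℝ) (hx : M ≤ x) (hM : 2 ≤ M) :
    ∀ d : ℕ, Real.Gamma x * M ^ d ≤ Real.Gamma (x + d) := by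
  intro d
  induction d with
  | zero => simp
  | succ d ih =>
    have hxd : (0 : ℝ) < x + d := by
      have : (0:ℝ) ≤ (d:ℝ) := Nat.cast_nonneg d
      linarith
    have hgpos : 0 < Real.Gamma (x + d) := Real.Gamma_pos_of_pos hxd
    have hrec : Real.Gamma (x + (d + 1) : ℝ) = (x + d) * Real.Gamma (x + d) := by
      have := Real.Gamma_add_one (s := x + d) (ne_of_gt hxd)
      rw [← this]; ring_nf
    have : Real.Gamma x * M ^ (d+1) = (Real.Gamma x * M ^ d) * M := by ring
    rw [this]
    push_cast
    rw [hrec]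
    have hMx : M ≤ x + d := by
      have : (0:ℝ) ≤ (d:ℝ) := Nat.cast_nonneg d
      linarith
    calc Real.Gamma x * M ^ d * M ≤ Real.Gamma (x + d) * M :=
          mul_le_mul_of_nonneg_right ih (by linarith)
      _ ≤ Real.Gamma (x + d) * (x + d) := mul_le_mul_of_nonneg_left hMx (le_of_lt hgpos)
      _ = (x + d) * Real.Gamma (x + d) := mul_comm _ _

set_option maxHeartbeats 1000000 in
lemma phi3Term_abs_summable (b c w z : ℝ) :
    Summable (fun p : ℕ × ℕ => |phi3Term b c w z p.1 p.2|) := by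
  set M : ℝ := 2 * (|b| + 1) * (|w| + |z|) + 2 with hMdef
  have hM2 : 2 ≤ M := by
    have h1 : 0 ≤ 2 * (|b| + 1) * (|w| + |z|) := by positivity
    linarith
  have hM0 : (0 : ℝ) < M := by linarith
  set N : ℕ := ⌈|c| + M⌉₊ with hNdef
  have hcN : M ≤ c + N := by
    have h1 : |c| + M ≤ (N : ℝ) := Nat.le_ceil _
    have h2 : -|c| ≤ c := neg_abs_le c
    linarith
  have hgN : 0 < Real.Gamma (c + N) := Real.Gamma_pos_of_pos (by linarith)
  set C : ℝ := (Real.Gamma (c + N))⁻¹ * M ^ N with hCdef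
  have hC0 : 0 < C := by positivity
  have key : ∀ k m : ℕ, N ≤ k + m →
      |phi3Term b c w z k m| ≤ C * ((2 : ℝ)⁻¹ ^ k * (2 : ℝ)⁻¹ ^ m) := by
    intro k m hkm
    -- Gamma lower bound
    have hcast : ((k + m - N : ℕ) : ℝ) = (k : ℝ) + m - N := by
      push_cast [Nat.cast_sub hkm]; ring
    have hg1 : Real.Gamma (c + N) * M ^ (k + m - N) ≤ Real.Gamma (c + k + m) := by
      have := gamma_lower_aux (c + N) M hcN hM2 (k + m - N)
      rw [hcast] at this
      have he : c + (N : ℝ) + ((k : ℝ) + m - N) = c + k + m := by ring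
      rwa [he] at this
    have hMpow : (0 : ℝ) < M ^ (k + m - N) := by positivity
    have hgpos : 0 < Real.Gamma (c + k + m) := lt_of_lt_of_le (by positivity) hg1
    have hginv : (Real.Gamma (c + k + m))⁻¹ ≤ C * ((M ^ k)⁻¹ * (M ^ m)⁻¹) := by
      have h1 : (Real.Gamma (c + k + m))⁻¹ ≤ (Real.Gamma (c + N) * M ^ (k + m - N))⁻¹ :=
        inv_anti₀ (by positivity) hg1
      have h2 : M ^ (k + m - N) = M ^ (k + m) / M ^ N := pow_sub₀ M (ne_of_gt hM0) hkm
      rw [h2] at h1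
      calc (Real.Gamma (c + k + m))⁻¹ ≤ (Real.Gamma (c + N) * (M ^ (k + m) / M ^ N))⁻¹ := h1
        _ = C * ((M ^ k)⁻¹ * (M ^ m)⁻¹) := by
            rw [hCdef, pow_add]
            field_simp
    -- expand abs
    have habs : |phi3Term b c w z k m| =
        |Polynomial.eval b (ascPochhammer ℝ k)| * (Real.Gamma (c + k + m))⁻¹ *
          |w| ^ k * |z| ^ m / (Nat.factorial k * Nat.factorial m) := by
      unfold phi3Term
      rw [abs_div, abs_mul, abs_mul, abs_mul, abs_pow, abs_pow, abs_inv,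
        abs_of_pos hgpos]
      congr 1
      rw [abs_of_pos]
      positivity
    rw [habs]
    have hK : (0:ℝ) < Nat.factorial k := by positivity
    have hKm : (0:ℝ) < Nat.factorial m := by positivity
    have step1 : |Polynomial.eval b (ascPochhammer ℝ k)| * (Real.Gamma (c + k + m))⁻¹ *
          |w| ^ k * |z| ^ m / (Nat.factorial k * Nat.factorial m)
        ≤ ((|b| + 1) ^ k * Nat.factorial k) * (C * ((M ^ k)⁻¹ * (M ^ m)⁻¹)) *
          |w| ^ k * |z| ^ m / (Nat.factorial k * Nat.factorial m) := by
      gcongr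
      exact abs_ascPochhammer_eval_le b k
    refine step1.trans ?_
    have step2 : ((|b| + 1) ^ k * Nat.factorial k) * (C * ((M ^ k)⁻¹ * (M ^ m)⁻¹)) *
          |w| ^ k * |z| ^ m / (Nat.factorial k * Nat.factorial m)
        = C * ((((|b| + 1) * |w|) / M) ^ k * ((|z| / M) ^ m / Nat.factorial m)) := by
      rw [div_pow, div_pow, mul_pow]
      field_simp
    rw [step2]
    have hw2 : ((|b| + 1) * |w|) / M ≤ (2:ℝ)⁻¹ := by
      rw [div_le_iff₀ hM0]
      nlinarith [abs_nonneg b, abs_nonneg w, abs_nonneg z,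
        mul_nonneg (abs_nonneg b) (abs_nonneg z), mul_nonneg (abs_nonneg b) (abs_nonneg w)]
    have hz2 : |z| / M ≤ (2:ℝ)⁻¹ := by
      rw [div_le_iff₀ hM0]
      nlinarith [abs_nonneg b, abs_nonneg w, abs_nonneg z,
        mul_nonneg (abs_nonneg b) (abs_nonneg z), mul_nonneg (abs_nonneg b) (abs_nonneg w)]
    have hA : (((|b| + 1) * |w|) / M) ^ k ≤ (2:ℝ)⁻¹ ^ k :=
      pow_le_pow_left₀ (by positivity) hw2 k
    have hB : (|z| / M) ^ m / (Nat.factorial m : ℝ) ≤ (2:ℝ)⁻¹ ^ m := by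
      have h1 : (|z| / M) ^ m / (Nat.factorial m : ℝ) ≤ (|z| / M) ^ m / 1 := by
        gcongr
        exact_mod_cast Nat.one_le_iff_ne_zero.mpr (Nat.factorial_ne_zero m)
      rw [div_one] at h1
      exact h1.trans (pow_le_pow_left₀ (by positivity) hz2 m)
    exact mul_le_mul_of_nonneg_left
      (mul_le_mul hA hB (by positivity) (by positivity)) hC0.le
  -- assemble summability
  have hgeo : Summable (fun p : ℕ × ℕ => C * ((2 : ℝ)⁻¹ ^ p.1 * (2 : ℝ)⁻¹ ^ p.2)) := by
    apply Summable.mul_left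
    exact Summable.mul_of_nonneg
      (summable_geometric_of_lt_one (by norm_num) (by norm_num))
      (summable_geometric_of_lt_one (by norm_num) (by norm_num))
      (fun _ => by positivity) (fun _ => by positivity)
  rw [← Finset.summable_compl_iff (Finset.range N ×ˢ Finset.range N)]
  apply Summable.of_nonneg_of_le (fun _ => abs_nonneg _) _ (hgeo.subtype _)
  rintro ⟨⟨k, m⟩, hp⟩
  have hor : N ≤ k ∨ N ≤ m := by
    by_contra h
    push_neg at h
    exact hp (Finset.mem_product.mpr
      ⟨Finset.mem_range.mpr h.1, Finset.mem_range.mpr h.2⟩)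
  exact key k m (by omega)

lemma phi3Term_summable (b c w z : ℝ) :
    Summable (fun p : ℕ × ℕ => phi3Term b c w z p.1 p.2) :=
  (phi3Term_abs_summable b c w z).of_abs

lemma Phi3_eq_tsum (b c w z : ℝ) :
    Phi3 b c w z = ∑' p : ℕ × ℕ, phi3Term b c w z p.1 p.2 := by
  rw [Phi3]
  exact (Summable.tsum_prod (phi3Term_summable b c w z)).symm

lemma Gamma_inv_rec (x : ℝ) : (Real.Gamma x)⁻¹ = x * (Real.Gamma (x + 1))⁻¹ := by
  rcases eq_or_ne x 0 with h | h
  · simp [h]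
  rcases eq_or_ne (Real.Gamma x) 0 with hg | hg
  · obtain ⟨n, hn⟩ := (Real.Gamma_eq_zero_iff x).mp hg
    have hn1 : 1 ≤ n := by
      rcases Nat.eq_zero_or_pos n with h0 | h0
      · exfalso; apply h; rw [hn, h0]; simp
      · exact h0
    have hx1 : Real.Gamma (x + 1) = 0 := by
      rw [Real.Gamma_eq_zero_iff]
      exact ⟨n - 1, by rw [hn]; push_cast [Nat.cast_sub hn1]; ring⟩
    rw [hg, hx1]
    simp
  · have h1 : Real.Gamma (x + 1) = x * Real.Gamma x := Real.Gamma_add_one h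
    rw [h1, mul_inv, ← mul_assoc, mul_inv_cancel₀ h, one_mul]

lemma phi3Term_cm1 (b c w z : ℝ) (k m : ℕ) :
    phi3Term b (c - 1) w z k m = (c - 1 + k + m) * phi3Term b c w z k m := by
  unfold phi3Term
  have h1 := Gamma_inv_rec (c - 1 + k + m)
  have harg : c - 1 + (k : ℝ) + m + 1 = c + k + m := by ring
  rw [harg] at h1
  rw [h1]; ring

lemma phi3Term_k (b c w z : ℝ) (k m : ℕ) :
    ((k : ℝ) + 1) * phi3Term b c w z (k + 1) m = b * w * phi3Term (b + 1) (c + 1) w z k m := by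
  unfold phi3Term
  have hasc : Polynomial.eval b (ascPochhammer ℝ (k + 1))
      = b * Polynomial.eval (b + 1) (ascPochhammer ℝ k) := by
    rw [ascPochhammer_succ_left, Polynomial.eval_mul, Polynomial.eval_X, Polynomial.eval_comp,
      Polynomial.eval_add, Polynomial.eval_X, Polynomial.eval_one]
  rw [hasc]
  push_cast [Nat.factorial_succ]
  rw [show c + ((k:ℝ) + 1) + m = c + 1 + k + m by ring]
  have hk : ((k.factorial : ℝ)) ≠ 0 := by positivity
  have hm : ((m.factorial : ℝ)) ≠ 0 := by positivity
  have hk1 : ((k:ℝ) + 1) ≠ 0 := by positivity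
  generalize (Real.Gamma (c + 1 + (k:ℝ) + m))⁻¹ = G
  field_simp
  ring

lemma phi3Term_m (b c w z : ℝ) (k m : ℕ) :
    ((m : ℝ) + 1) * phi3Term b c w z k (m + 1) = z * phi3Term b (c + 1) w z k m := by
  unfold phi3Term
  push_cast [Nat.factorial_succ]
  rw [show c + (k:ℝ) + (m + 1) = c + 1 + k + m by ring]
  have hk : ((k.factorial : ℝ)) ≠ 0 := by positivity
  have hm : ((m.factorial : ℝ)) ≠ 0 := by positivity
  have hm1 : ((m:ℝ) + 1) ≠ 0 := by positivity
  generalize (Real.Gamma (c + 1 + (k:ℝ) + m))⁻¹ = G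
  field_simp
  ring

section Shift

def shiftK : ℕ × ℕ → ℕ × ℕ := fun p => (p.1 + 1, p.2)
def shiftM : ℕ × ℕ → ℕ × ℕ := fun p => (p.1, p.2 + 1)

lemma shiftK_inj : Function.Injective shiftK := by
  intro p q h
  simp only [shiftK, Prod.ext_iff] at h ⊢
  omega

lemma shiftM_inj : Function.Injective shiftM := by
  intro p q h
  simp only [shiftM, Prod.ext_iff] at h ⊢
  omega

lemma fstmul_vanish (b c w z : ℝ) :
    ∀ p ∉ Set.range shiftK, (p.1 : ℝ) * phi3Term b c w z p.1 p.2 = 0 := by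
  rintro ⟨k, m⟩ hp
  have hk : k = 0 := by
    by_contra h
    exact hp ⟨(k - 1, m), by simp [shiftK]; omega⟩
  simp [hk]

lemma sndmul_vanish (b c w z : ℝ) :
    ∀ p ∉ Set.range shiftM, (p.2 : ℝ) * phi3Term b c w z p.1 p.2 = 0 := by
  rintro ⟨k, m⟩ hp
  have hm : m = 0 := by
    by_contra h
    exact hp ⟨(k, m - 1), by simp [shiftM]; omega⟩
  simp [hm]

lemma fstmul_comp (b c w z : ℝ) :
    (fun p : ℕ × ℕ => (p.1 : ℝ) * phi3Term b c w z p.1 p.2) ∘ shiftK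
      = fun p : ℕ × ℕ => b * w * phi3Term (b + 1) (c + 1) w z p.1 p.2 := by
  funext p
  simp only [Function.comp, shiftK]
  rw [← phi3Term_k b c w z p.1 p.2]
  push_cast
  ring

lemma sndmul_comp (b c w z : ℝ) :
    (fun p : ℕ × ℕ => (p.2 : ℝ) * phi3Term b c w z p.1 p.2) ∘ shiftM
      = fun p : ℕ × ℕ => z * phi3Term b (c + 1) w z p.1 p.2 := by
  funext p
  simp only [Function.comp, shiftM]
  rw [← phi3Term_m b c w z p.1 p.2]
  push_cast
  ring

lemma fstmul_summable (b c w z : ℝ) :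
    Summable (fun p : ℕ × ℕ => (p.1 : ℝ) * phi3Term b c w z p.1 p.2) := by
  rw [← Function.Injective.summable_iff shiftK_inj (fstmul_vanish b c w z)]
  rw [fstmul_comp b c w z]
  exact (phi3Term_summable (b + 1) (c + 1) w z).mul_left _

lemma sndmul_summable (b c w z : ℝ) :
    Summable (fun p : ℕ × ℕ => (p.2 : ℝ) * phi3Term b c w z p.1 p.2) := by
  rw [← Function.Injective.summable_iff shiftM_inj (sndmul_vanish b c w z)]
  rw [sndmul_comp b c w z]
  exact (phi3Term_summable b (c + 1) w z).mul_left _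

lemma fstmul_tsum (b c w z : ℝ) :
    ∑' p : ℕ × ℕ, (p.1 : ℝ) * phi3Term b c w z p.1 p.2
      = b * w * Phi3 (b + 1) (c + 1) w z := by
  rw [← Function.Injective.tsum_eq shiftK_inj (f := fun p : ℕ × ℕ => (p.1 : ℝ) * phi3Term b c w z p.1 p.2)
    (by intro p hp; by_contra h; exact hp (fstmul_vanish b c w z p h))]
  have := congrFun (fstmul_comp b c w z)
  calc ∑' p : ℕ × ℕ, ((fun p : ℕ × ℕ => (p.1 : ℝ) * phi3Term b c w z p.1 p.2) (shiftK p))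
      = ∑' p : ℕ × ℕ, b * w * phi3Term (b + 1) (c + 1) w z p.1 p.2 := by
        congr 1; funext p; exact this p
    _ = b * w * Phi3 (b + 1) (c + 1) w z := by
        rw [tsum_mul_left, ← Phi3_eq_tsum]

lemma sndmul_tsum (b c w z : ℝ) :
    ∑' p : ℕ × ℕ, (p.2 : ℝ) * phi3Term b c w z p.1 p.2
      = z * Phi3 b (c + 1) w z := by
  rw [← Function.Injective.tsum_eq shiftM_inj (f := fun p : ℕ × ℕ => (p.2 : ℝ) * phi3Term b c w z p.1 p.2)
    (by intro p hp; by_contra h; exact hp (sndmul_vanish b c w z p h))]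
  have := congrFun (sndmul_comp b c w z)
  calc ∑' p : ℕ × ℕ, ((fun p : ℕ × ℕ => (p.2 : ℝ) * phi3Term b c w z p.1 p.2) (shiftM p))
      = ∑' p : ℕ × ℕ, z * phi3Term b (c + 1) w z p.1 p.2 := by
        congr 1; funext p; exact this p
    _ = z * Phi3 b (c + 1) w z := by
        rw [tsum_mul_left, ← Phi3_eq_tsum]

end Shift

lemma phi3_contig (b c w z : ℝ) :
    Phi3 b (c - 1) w z = (c - 1) * Phi3 b c w z + b * w * Phi3 (b + 1) (c + 1) w z
      + z * Phi3 b (c + 1) w z := by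
  have h1 : Summable (fun p : ℕ × ℕ => (c - 1) * phi3Term b c w z p.1 p.2) :=
    (phi3Term_summable b c w z).mul_left _
  have h2 := fstmul_summable b c w z
  have h3 := sndmul_summable b c w z
  calc Phi3 b (c - 1) w z = ∑' p : ℕ × ℕ, phi3Term b (c - 1) w z p.1 p.2 := Phi3_eq_tsum _ _ _ _
    _ = ∑' p : ℕ × ℕ, ((c - 1) * phi3Term b c w z p.1 p.2
          + ((p.1 : ℝ) * phi3Term b c w z p.1 p.2 + (p.2 : ℝ) * phi3Term b c w z p.1 p.2)) := by
        congr 1; funext p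
        rw [phi3Term_cm1]
        ring
    _ = (c - 1) * Phi3 b c w z + (b * w * Phi3 (b + 1) (c + 1) w z + z * Phi3 b (c + 1) w z) := by
        rw [Summable.tsum_add h1 (h2.add h3), Summable.tsum_add h2 h3, tsum_mul_left, ← Phi3_eq_tsum,
          fstmul_tsum, sndmul_tsum]
    _ = _ := by ring

lemma phi3_L3 (b c w z : ℝ) :
    b * w * Phi3 (b + 1) c w z
      = Phi3 b (c - 2) w z - (c - 2) * Phi3 b (c - 1) w z - z * Phi3 b c w z := by
  have h := phi3_contig b (c - 1) w z
  rw [show c - 1 - 1 = c - 2 by ring, show c - 1 + 1 = c by ring] at h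
  linarith

lemma asc_succ_left_eval (y : ℝ) (n : ℕ) :
    Polynomial.eval y (ascPochhammer ℝ (n + 1))
      = y * Polynomial.eval (y + 1) (ascPochhammer ℝ n) := by
  rw [ascPochhammer_succ_left, Polynomial.eval_mul, Polynomial.eval_X, Polynomial.eval_comp,
    Polynomial.eval_add, Polynomial.eval_X, Polynomial.eval_one]

lemma core (b x : ℝ) (n m : ℕ) (hnm : n ≤ m) :
    Polynomial.eval (b + 1 - m) (ascPochhammer ℝ m) * Polynomial.eval x (ascPochhammer ℝ n)
    = ((m - n : ℕ) : ℝ) * (Polynomial.eval (b - m + 1) (ascPochhammer ℝ (m - 1)) *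
        Polynomial.eval (x - 1) (ascPochhammer ℝ n))
      + (x + m - 1) * n * (Polynomial.eval (b - m + 1) (ascPochhammer ℝ (m - 1)) *
        Polynomial.eval x (ascPochhammer ℝ (n - 1)))
      + Polynomial.eval (b - m) (ascPochhammer ℝ m) * Polynomial.eval x (ascPochhammer ℝ n) := by
  rcases m with _ | m'
  · interval_cases n
    simp
  · have h1 : Polynomial.eval (b + 1 - ((m' + 1 : ℕ) : ℝ)) (ascPochhammer ℝ (m' + 1))
        = Polynomial.eval (b - m') (ascPochhammer ℝ m') * b := by
      rw [ascPochhammer_succ_eval]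
      have : b + 1 - ((m' + 1 : ℕ) : ℝ) = b - m' := by push_cast; ring
      rw [this]
      congr 1
      push_cast; ring
    have h3 : Polynomial.eval (b - ((m' + 1 : ℕ) : ℝ)) (ascPochhammer ℝ (m' + 1))
        = (b - m' - 1) * Polynomial.eval (b - m') (ascPochhammer ℝ m') := by
      rw [asc_succ_left_eval]
      have e2 : b - ((m' + 1 : ℕ) : ℝ) + 1 = b - m' := by push_cast; ring
      rw [e2]
      congr 1
      push_cast; ring
    have hD : b - ((m' + 1 : ℕ) : ℝ) + 1 = b - m' := by push_cast; ring
    rw [h1, h3, hD]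
    have hm1 : (m' + 1) - 1 = m' := rfl
    rw [hm1]
    rcases n with _ | n'
    · have hc : (((m' + 1) - 0 : ℕ) : ℝ) = (m' : ℝ) + 1 := by norm_num
      simp only [Nat.sub_zero]
      push_cast
      simp only [ascPochhammer_zero, Polynomial.eval_one]
      ring
    · have hnm' : n' ≤ m' := Nat.lt_succ_iff.mp hnm
      have hc : (((m' + 1) - (n' + 1) : ℕ) : ℝ) = (m' : ℝ) - n' := by
        rw [Nat.succ_sub_succ, Nat.cast_sub hnm']
      rw [hc]
      have e4 : Polynomial.eval x (ascPochhammer ℝ (n' + 1))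
          = Polynomial.eval x (ascPochhammer ℝ n') * (x + n') := ascPochhammer_succ_eval _ _
      have e5 : Polynomial.eval (x - 1) (ascPochhammer ℝ (n' + 1))
          = (x - 1) * Polynomial.eval x (ascPochhammer ℝ n') := by
        rw [asc_succ_left_eval]
        congr 2
        ring
      have e6 : (n' + 1 : ℕ) - 1 = n' := rfl
      rw [e4, e5, e6]
      push_cast
      ring

noncomputable def tA (β c z : ℝ) (i k : ℕ) : ℝ :=
  (-1 : ℝ) ^ k * Polynomial.eval (β - i + k) (ascPochhammer ℝ (i - k)) *
    Polynomial.eval (c - i - 1 + k) (ascPochhammer ℝ (i - 2 * k)) * z ^ k /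
    (Nat.factorial (i - 2 * k) * Nat.factorial k)

lemma perkA (b c z : ℝ) (j : ℕ) :
    -(tA (b + 1) c z (j + 2) 0)
      = - (c - 2) * tA b (c - 1) z (j + 1) 0 - tA b c z (j + 2) 0 := by
  have hco := core b (c - ((j + 2 : ℕ) : ℝ) - 1) (j + 2) (j + 2) le_rfl
  simp only [Nat.sub_self, Nat.cast_zero, zero_mul, zero_add] at hco
  rw [show (j + 2) - 1 = j + 1 from rfl] at hco
  rw [show c - ((j + 2 : ℕ) : ℝ) - 1 + ((j + 2 : ℕ) : ℝ) - 1 = c - 2 by push_cast; ring] at hco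
  simp only [tA, pow_zero, Nat.cast_zero, add_zero, Nat.sub_zero, Nat.mul_zero,
    Nat.factorial_zero, Nat.cast_one, mul_one, one_mul]
  rw [show c - 1 - ((j + 1 : ℕ) : ℝ) - 1 = c - ((j + 2 : ℕ) : ℝ) - 1 by push_cast; ring,
    show b - ((j + 1 : ℕ) : ℝ) = b - ((j + 2 : ℕ) : ℝ) + 1 by push_cast; ring]
  rw [hco]
  have f2 : (((j + 2).factorial : ℕ) : ℝ) = (((j : ℝ) + 2)) * ((j + 1).factorial : ℕ) := by
    rw [show (j + 2).factorial = (j + 2) * (j + 1).factorial from rfl]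
    push_cast; ring
  have h1 : (((j + 1).factorial : ℕ) : ℝ) ≠ 0 := by positivity
  have h2 : ((j : ℝ) + 2) ≠ 0 := by positivity
  rw [f2]
  field_simp
  push_cast
  ring

lemma perkB (b c z : ℝ) (k' : ℕ) :
    -(tA (b + 1) c z (2 * k' + 2) (k' + 1))
      = z * tA b (c - 2) z (2 * k') k' - tA b c z (2 * k' + 2) (k' + 1) := by
  have hco := core b 0 0 (k' + 1) (Nat.zero_le _)
  simp only [ascPochhammer_zero, Polynomial.eval_one, mul_one, Nat.sub_zero, Nat.cast_zero,
    zero_mul, mul_zero, add_zero, zero_add, Nat.cast_ofNat] at hco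
  rw [show (k' + 1) - 1 = k' from rfl] at hco
  simp only [tA]
  rw [show 2 * k' + 2 - (k' + 1) = k' + 1 from by omega,
    show 2 * k' + 2 - 2 * (k' + 1) = 0 from by omega,
    show 2 * k' - k' = k' from by omega,
    show 2 * k' - 2 * k' = 0 from by omega]
  simp only [ascPochhammer_zero, Polynomial.eval_one, mul_one, Nat.factorial_zero,
    Nat.cast_one, one_mul]
  rw [show b + 1 - ((2 * k' + 2 : ℕ) : ℝ) + ((k' + 1 : ℕ) : ℝ) = b + 1 - ((k' + 1 : ℕ) : ℝ) by
      push_cast; ring,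
    show b - ((2 * k' : ℕ) : ℝ) + ((k' : ℕ) : ℝ) = b - ((k' + 1 : ℕ) : ℝ) + 1 by push_cast; ring,
    show b - ((2 * k' + 2 : ℕ) : ℝ) + ((k' + 1 : ℕ) : ℝ) = b - ((k' + 1 : ℕ) : ℝ) by
      push_cast; ring]
  rw [hco]
  have f2 : (((k' + 1).factorial : ℕ) : ℝ) = ((k' : ℝ) + 1) * (k'.factorial : ℕ) := by
    rw [Nat.factorial_succ]; push_cast; ring
  have h1 : ((k'.factorial : ℕ) : ℝ) ≠ 0 := by positivity
  have h2 : ((k' : ℝ) + 1) ≠ 0 := by positivity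
  rw [f2, pow_succ, pow_succ]
  push_cast
  field_simp
  ring

lemma perkC (b c z : ℝ) (n' k' : ℕ) :
    -(tA (b + 1) c z (n' + 2 * k' + 3) (k' + 1))
      = z * tA b (c - 2) z (n' + 2 * k' + 1) k'
        - (c - 2) * tA b (c - 1) z (n' + 2 * k' + 2) (k' + 1)
        - tA b c z (n' + 2 * k' + 3) (k' + 1) := by
  have hco := core b (c - ((n' + k' + 2 : ℕ) : ℝ) - 1) (n' + 1) (n' + k' + 2) (by omega)
  rw [show (n' + k' + 2) - 1 = n' + k' + 1 from rfl,
    show (n' + 1) - 1 = n' from rfl,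
    show n' + k' + 2 - (n' + 1) = k' + 1 from by omega,
    show c - ((n' + k' + 2 : ℕ) : ℝ) - 1 + ((n' + k' + 2 : ℕ) : ℝ) - 1 = c - 2 by
      push_cast; ring] at hco
  simp only [tA]
  rw [show n' + 2 * k' + 3 - (k' + 1) = n' + k' + 2 from by omega,
    show n' + 2 * k' + 3 - 2 * (k' + 1) = n' + 1 from by omega,
    show n' + 2 * k' + 1 - k' = n' + k' + 1 from by omega,
    show n' + 2 * k' + 1 - 2 * k' = n' + 1 from by omega,
    show n' + 2 * k' + 2 - (k' + 1) = n' + k' + 1 from by omega,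
    show n' + 2 * k' + 2 - 2 * (k' + 1) = n' from by omega]
  rw [show b + 1 - ((n' + 2 * k' + 3 : ℕ) : ℝ) + ((k' + 1 : ℕ) : ℝ)
        = b + 1 - ((n' + k' + 2 : ℕ) : ℝ) by push_cast; ring,
    show c - ((n' + 2 * k' + 3 : ℕ) : ℝ) - 1 + ((k' + 1 : ℕ) : ℝ)
        = c - ((n' + k' + 2 : ℕ) : ℝ) - 1 by push_cast; ring,
    show b - ((n' + 2 * k' + 1 : ℕ) : ℝ) + ((k' : ℕ) : ℝ)
        = b - ((n' + k' + 2 : ℕ) : ℝ) + 1 by push_cast; ring,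
    show c - 2 - ((n' + 2 * k' + 1 : ℕ) : ℝ) - 1 + ((k' : ℕ) : ℝ)
        = c - ((n' + k' + 2 : ℕ) : ℝ) - 1 - 1 by push_cast; ring,
    show b - ((n' + 2 * k' + 2 : ℕ) : ℝ) + ((k' + 1 : ℕ) : ℝ)
        = b - ((n' + k' + 2 : ℕ) : ℝ) + 1 by push_cast; ring,
    show c - 1 - ((n' + 2 * k' + 2 : ℕ) : ℝ) - 1 + ((k' + 1 : ℕ) : ℝ)
        = c - ((n' + k' + 2 : ℕ) : ℝ) - 1 by push_cast; ring,
    show b - ((n' + 2 * k' + 3 : ℕ) : ℝ) + ((k' + 1 : ℕ) : ℝ)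
        = b - ((n' + k' + 2 : ℕ) : ℝ) by push_cast; ring]
  rw [mul_assoc ((-1 : ℝ) ^ (k' + 1)), hco]
  have f2 : (((k' + 1).factorial : ℕ) : ℝ) = ((k' : ℝ) + 1) * (k'.factorial : ℕ) := by
    rw [Nat.factorial_succ]; push_cast; ring
  have f3 : (((n' + 1).factorial : ℕ) : ℝ) = ((n' : ℝ) + 1) * (n'.factorial : ℕ) := by
    rw [Nat.factorial_succ]; push_cast; ring
  have h1 : ((k'.factorial : ℕ) : ℝ) ≠ 0 := by positivity
  have h2 : ((k' : ℝ) + 1) ≠ 0 := by positivity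
  have h3 : ((n'.factorial : ℕ) : ℝ) ≠ 0 := by positivity
  have h4 : ((n' : ℝ) + 1) ≠ 0 := by positivity
  rw [f2, f3, pow_succ, pow_succ]
  push_cast
  field_simp
  ring

lemma perk (b c z : ℝ) (j k : ℕ) (hk : 2 * k ≤ j + 2) :
    -(tA (b + 1) c z (j + 2) k)
      = z * (if k = 0 then (0 : ℝ) else tA b (c - 2) z j (k - 1))
        - (c - 2) * (if 2 * k ≤ j + 1 then tA b (c - 1) z (j + 1) k else (0 : ℝ))
        - tA b c z (j + 2) k := by
  rcases Nat.eq_zero_or_pos k with rfl | hk1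
  · rw [if_pos rfl, if_pos (by omega)]
    rw [perkA b c z j]
    ring
  · obtain ⟨k', rfl⟩ : ∃ k', k = k' + 1 := ⟨k - 1, by omega⟩
    rcases Nat.lt_or_ge (2 * (k' + 1)) (j + 2) with hlt | hge
    · obtain ⟨n', rfl⟩ : ∃ n', j = n' + 2 * k' + 1 := ⟨j - 2 * k' - 1, by omega⟩
      rw [if_neg (Nat.succ_ne_zero k'), if_pos (by omega),
        show k' + 1 - 1 = k' from rfl,
        show n' + 2 * k' + 1 + 2 = n' + 2 * k' + 3 from rfl,
        show n' + 2 * k' + 1 + 1 = n' + 2 * k' + 2 from rfl]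
      exact perkC b c z n' k'
    · obtain rfl : j = 2 * k' := by omega
      rw [if_neg (Nat.succ_ne_zero k'), if_neg (by omega),
        show k' + 1 - 1 = k' from rfl]
      rw [show 2 * k' + 2 = 2 * k' + 2 from rfl]
      have := perkB b c z k'
      rw [this]
      ring

lemma Acoef_eq (b : ℕ) (c z : ℝ) (i : ℕ) :
    Acoef b c z i = ((-1 : ℝ) ^ (b - 1) / (Nat.factorial (b - 1) : ℝ)) *
      ∑ k ∈ Finset.range (i / 2 + 1), tA (b : ℝ) c z i k := rfl

lemma asc_eval_neg_nat (n : ℕ) (x : ℝ) (r : ℕ) (hr : r < n) (hx : x + r = 0) :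
    Polynomial.eval x (ascPochhammer ℝ n) = 0 := by
  induction n with
  | zero => omega
  | succ n ih =>
    rw [ascPochhammer_succ_eval]
    rcases Nat.lt_or_ge r n with h | h
    · rw [ih h, zero_mul]
    · have hrn : r = n := by omega
      subst hrn
      rw [hx, mul_zero]

lemma Acoef_vanish (b : ℕ) (hb : 1 ≤ b) (c z : ℝ) (i : ℕ) (hi : 2 * b - 1 ≤ i) :
    Acoef b c z i = 0 := by
  rw [Acoef_eq, Finset.sum_eq_zero, mul_zero]
  intro k hk
  simp only [Finset.mem_range] at hk
  have hk2 : 2 * k ≤ i := by omega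
  have hbk : b + k ≤ i := by omega
  have h0 : Polynomial.eval ((b : ℝ) - i + k) (ascPochhammer ℝ (i - k)) = 0 := by
    apply asc_eval_neg_nat _ _ (i - (b + k)) (by omega)
    rw [Nat.cast_sub hbk]
    push_cast
    ring
  unfold tA
  rw [h0]
  simp

lemma sum_id (B c z : ℝ) (j : ℕ) :
    ∑ k ∈ Finset.range ((j + 2) / 2 + 1), -tA (B + 1) c z (j + 2) k
      = z * ∑ k ∈ Finset.range (j / 2 + 1), tA B (c - 2) z j k
        - (c - 2) * ∑ k ∈ Finset.range ((j + 1) / 2 + 1), tA B (c - 1) z (j + 1) k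
        - ∑ k ∈ Finset.range ((j + 2) / 2 + 1), tA B c z (j + 2) k := by
  have hstep : ∀ k ∈ Finset.range ((j + 2) / 2 + 1),
      -tA (B + 1) c z (j + 2) k
        = z * (if k = 0 then (0 : ℝ) else tA B (c - 2) z j (k - 1))
          - (c - 2) * (if 2 * k ≤ j + 1 then tA B (c - 1) z (j + 1) k else (0 : ℝ))
          - tA B c z (j + 2) k := by
    intro k hk
    simp only [Finset.mem_range] at hk
    exact perk B c z j k (by omega)
  rw [Finset.sum_congr rfl hstep]
  rw [Finset.sum_sub_distrib, Finset.sum_sub_distrib, ← Finset.mul_sum, ← Finset.mul_sum]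
  have hX : ∑ k ∈ Finset.range ((j + 2) / 2 + 1),
      (if k = 0 then (0 : ℝ) else tA B (c - 2) z j (k - 1))
      = ∑ k ∈ Finset.range (j / 2 + 1), tA B (c - 2) z j k := by
    rw [show (j + 2) / 2 + 1 = (j / 2 + 1) + 1 from by omega, Finset.sum_range_succ']
    simp
  have hY : ∑ k ∈ Finset.range ((j + 2) / 2 + 1),
      (if 2 * k ≤ j + 1 then tA B (c - 1) z (j + 1) k else (0 : ℝ))
      = ∑ k ∈ Finset.range ((j + 1) / 2 + 1), tA B (c - 1) z (j + 1) k := by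
    rcases Nat.even_or_odd j with ⟨a, rfl⟩ | ⟨a, rfl⟩
    · rw [show (a + a + 2) / 2 + 1 = (a + 1) + 1 from by omega, Finset.sum_range_succ,
        if_neg (by omega), add_zero, show (a + a + 1) / 2 + 1 = a + 1 from by omega]
      apply Finset.sum_congr rfl
      intro k hk
      simp only [Finset.mem_range] at hk
      rw [if_pos (by omega)]
    · rw [show (2 * a + 1 + 2) / 2 + 1 = a + 2 from by omega,
        show (2 * a + 1 + 1) / 2 + 1 = a + 2 from by omega]
      apply Finset.sum_congr rfl
      intro k hk
      simp only [Finset.mem_range] at hk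
      rw [if_pos (by omega)]
  rw [hX, hY]

lemma sigma_rec (b' : ℕ) :
    ((b' + 1 : ℕ) : ℝ) * ((-1 : ℝ) ^ (b' + 1) / (Nat.factorial (b' + 1) : ℝ))
      = -((-1 : ℝ) ^ b' / (Nat.factorial b' : ℝ)) := by
  rw [pow_succ, Nat.factorial_succ]
  have h1 : ((b'.factorial : ℕ) : ℝ) ≠ 0 := by positivity
  have h2 : ((b' : ℝ) + 1) ≠ 0 := by positivity
  push_cast
  field_simp

lemma R2 (b' : ℕ) (c z : ℝ) (j : ℕ) :
    ((b' + 1 : ℕ) : ℝ) * Acoef (b' + 1 + 1) c z (j + 2)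
      = z * Acoef (b' + 1) (c - 2) z j - (c - 2) * Acoef (b' + 1) (c - 1) z (j + 1)
        - Acoef (b' + 1) c z (j + 2) := by
  rw [Acoef_eq, Acoef_eq, Acoef_eq, Acoef_eq]
  simp only [Nat.add_sub_cancel]
  have hcast : ((b' + 1 + 1 : ℕ) : ℝ) = ((b' + 1 : ℕ) : ℝ) + 1 := by push_cast; ring
  rw [hcast]
  have hs := sum_id ((b' + 1 : ℕ) : ℝ) c z j
  rw [Finset.sum_neg_distrib] at hs
  set S1 := ∑ k ∈ Finset.range ((j + 2) / 2 + 1), tA (((b' + 1 : ℕ) : ℝ) + 1) c z (j + 2) k with hS1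
  set T1 := ∑ k ∈ Finset.range (j / 2 + 1), tA ((b' + 1 : ℕ) : ℝ) (c - 2) z j k with hT1
  set T2 := ∑ k ∈ Finset.range ((j + 1) / 2 + 1), tA ((b' + 1 : ℕ) : ℝ) (c - 1) z (j + 1) k with hT2
  set T3 := ∑ k ∈ Finset.range ((j + 2) / 2 + 1), tA ((b' + 1 : ℕ) : ℝ) c z (j + 2) k with hT3
  have hσ := sigma_rec b'
  linear_combination S1 * hσ + ((-1 : ℝ) ^ b' / (Nat.factorial b' : ℝ)) * hs

lemma Acoef_zero (b : ℕ) (c z : ℝ) :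
    Acoef b c z 0 = (-1 : ℝ) ^ (b - 1) / (Nat.factorial (b - 1) : ℝ) := by
  rw [Acoef_eq]
  rw [show (0 : ℕ) / 2 + 1 = 1 from rfl, Finset.sum_range_one]
  simp [tA]

lemma Acoef_one (b : ℕ) (c z : ℝ) :
    Acoef b c z 1
      = ((-1 : ℝ) ^ (b - 1) / (Nat.factorial (b - 1) : ℝ)) * (((b : ℝ) - 1) * (c - 2)) := by
  rw [Acoef_eq]
  rw [show (1 : ℕ) / 2 + 1 = 1 from rfl, Finset.sum_range_one]
  unfold tA
  simp only [pow_zero, one_mul, mul_one, Nat.cast_zero, add_zero, Nat.cast_one, Nat.sub_zero,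
    Nat.mul_zero, Nat.factorial_zero, Nat.factorial_one, ascPochhammer_one, Polynomial.eval_X]
  ring

lemma R0 (b' : ℕ) (c z : ℝ) :
    ((b' + 1 : ℕ) : ℝ) * Acoef (b' + 1 + 1) c z 0 = -Acoef (b' + 1) c z 0 := by
  rw [Acoef_zero, Acoef_zero]
  simp only [Nat.add_sub_cancel]
  exact sigma_rec b'

lemma R1 (b' : ℕ) (c z : ℝ) :
    ((b' + 1 : ℕ) : ℝ) * Acoef (b' + 1 + 1) c z 1
      = -(c - 2) * Acoef (b' + 1) (c - 1) z 0 - Acoef (b' + 1) c z 1 := by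
  rw [Acoef_one, Acoef_zero, Acoef_one]
  simp only [Nat.add_sub_cancel]
  have hσ := sigma_rec b'
  push_cast at hσ ⊢
  linear_combination (((b' : ℝ) + 1 + 1 - 1) * (c - 2)) * hσ


lemma Acoef_succ2 (n' : ℕ) (c z : ℝ) (j : ℕ) :
    ((n' + 1 : ℕ) : ℝ) * Acoef (n' + 2) c z (j + 2)
      = z * Acoef (n' + 1) (c - 2) z j - (c - 2) * Acoef (n' + 1) (c - 1) z (j + 1)
        - Acoef (n' + 1) c z (j + 2) := by
  have h := R2 n' c z j
  rwa [show n' + 1 + 1 = n' + 2 by omega] at h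

lemma Acoef_succ0 (n' : ℕ) (c z : ℝ) :
    ((n' + 1 : ℕ) : ℝ) * Acoef (n' + 2) c z 0 = -Acoef (n' + 1) c z 0 := by
  have h := R0 n' c z
  rwa [show n' + 1 + 1 = n' + 2 by omega] at h

lemma Acoef_succ1 (n' : ℕ) (c z : ℝ) :
    ((n' + 1 : ℕ) : ℝ) * Acoef (n' + 2) c z 1
      = -(c - 2) * Acoef (n' + 1) (c - 1) z 0 - Acoef (n' + 1) c z 1 := by
  have h := R1 n' c z
  rwa [show n' + 1 + 1 = n' + 2 by omega] at h

/-- reduction of Φ̃₃ to first-parameter one via the A_i polynomials. -/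
theorem phi3_reduction (b : ℕ) (c w z : ℝ) (hb : 0 < b) (hw : w ≠ 0) (hz : z ≠ 0) :
    Phi3 (b : ℝ) c w z =
      (z / w) ^ (b - 1) *
        ∑ i ∈ Finset.range (2 * (b - 1) + 1),
          (z ^ i)⁻¹ * Acoef b c z i * Phi3 1 (c - i) w z := by
  have main : ∀ n : ℕ, ∀ c : ℝ, Phi3 ((n + 1 : ℕ) : ℝ) c w z =
      (z / w) ^ ((n + 1) - 1) *
        ∑ i ∈ Finset.range (2 * ((n + 1) - 1) + 1),
          (z ^ i)⁻¹ * Acoef (n + 1) c z i * Phi3 1 (c - i) w z := by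
    intro n
    induction n with
    | zero =>
      intro c
      have hA : Acoef 1 c z 0 = 1 := by
        rw [Acoef_zero]; norm_num
      simp [hA]
    | succ n' IH =>
      intro c
      simp only [Nat.add_sub_cancel] at IH ⊢
      have hb1 : ((n' + 1 : ℕ) : ℝ) ≠ 0 := by positivity
      have hnw : ((n' + 1 : ℕ) : ℝ) * w ≠ 0 := mul_ne_zero hb1 hw
      -- extended induction hypothesis
      have IHext : ∀ c' : ℝ, Phi3 ((n' + 1 : ℕ) : ℝ) c' w z
          = (z / w) ^ n' * ∑ i ∈ Finset.range (2 * n' + 3),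
              (z ^ i)⁻¹ * Acoef (n' + 1) c' z i * Phi3 1 (c' - i) w z := by
        intro c'
        rw [IH c']
        congr 1
        have v1 : Acoef (n' + 1) c' z (2 * n' + 1) = 0 :=
          Acoef_vanish _ (by omega) _ _ _ (by omega)
        have v2 : Acoef (n' + 1) c' z (2 * n' + 1 + 1) = 0 :=
          Acoef_vanish _ (by omega) _ _ _ (by omega)
        conv_rhs => rw [show 2 * n' + 3 = (2 * n' + 1 + 1) + 1 by omega,
          Finset.sum_range_succ, Finset.sum_range_succ]
        rw [v1, v2]
        ring
      -- per-index identity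
      have hper : ∀ i : ℕ,
          ((n' + 1 : ℕ) : ℝ) * z * ((z ^ (i + 1 + 1))⁻¹ * Acoef (n' + 2) c z (i + 1 + 1) * Phi3 1 (c - ((i + 1 + 1 : ℕ) : ℝ)) w z)
            = (z ^ (i))⁻¹ * Acoef (n' + 1) (c - 2) z (i) * Phi3 1 (c - 2 - ((i : ℕ) : ℝ)) w z
              - (c - 2) * ((z ^ (i + 1))⁻¹ * Acoef (n' + 1) (c - 1) z (i + 1) * Phi3 1 (c - 1 - ((i + 1 : ℕ) : ℝ)) w z)
              - z * ((z ^ (i + 1 + 1))⁻¹ * Acoef (n' + 1) c z (i + 1 + 1) * Phi3 1 (c - ((i + 1 + 1 : ℕ) : ℝ)) w z) := by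
        intro i
        have hR := Acoef_succ2 n' c z i
        rw [show i + 2 = i + 1 + 1 by omega] at hR
        have e1 : c - 2 - ((i : ℕ) : ℝ) = c - ((i + 1 + 1 : ℕ) : ℝ) := by push_cast; ring
        have e2 : c - 1 - ((i + 1 : ℕ) : ℝ) = c - ((i + 1 + 1 : ℕ) : ℝ) := by push_cast; ring
        rw [e1, e2]
        calc ((n' + 1 : ℕ) : ℝ) * z * ((z ^ (i + 1 + 1))⁻¹ * Acoef (n' + 2) c z (i + 1 + 1) * Phi3 1 (c - ((i + 1 + 1 : ℕ) : ℝ)) w z)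
            = (((n' + 1 : ℕ) : ℝ) * Acoef (n' + 2) c z (i + 1 + 1)) *
                (z * (z ^ (i + 1 + 1))⁻¹ * Phi3 1 (c - ((i + 1 + 1 : ℕ) : ℝ)) w z) := by ring
          _ = (z * Acoef (n' + 1) (c - 2) z i - (c - 2) * Acoef (n' + 1) (c - 1) z (i + 1)
                - Acoef (n' + 1) c z (i + 1 + 1)) *
                (z * (z ^ (i + 1 + 1))⁻¹ * Phi3 1 (c - ((i + 1 + 1 : ℕ) : ℝ)) w z) := by
              rw [hR]
          _ = _ := by
              simp only [pow_succ]
              have hzi : z ^ i ≠ 0 := pow_ne_zero _ hz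
              field_simp
      -- boundary identities
      have hB0 : ((n' + 1 : ℕ) : ℝ) * z * ((z ^ (0))⁻¹ * Acoef (n' + 2) c z (0) * Phi3 1 (c - ((0 : ℕ) : ℝ)) w z)
          = -(z * ((z ^ (0))⁻¹ * Acoef (n' + 1) c z (0) * Phi3 1 (c - ((0 : ℕ) : ℝ)) w z)) := by
        have hR := Acoef_succ0 n' c z
        calc ((n' + 1 : ℕ) : ℝ) * z * ((z ^ (0))⁻¹ * Acoef (n' + 2) c z (0) * Phi3 1 (c - ((0 : ℕ) : ℝ)) w z)
            = (((n' + 1 : ℕ) : ℝ) * Acoef (n' + 2) c z 0) *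
                (z * (z ^ (0:ℕ))⁻¹ * Phi3 1 (c - ((0 : ℕ) : ℝ)) w z) := by ring
          _ = (-Acoef (n' + 1) c z 0) *
                (z * (z ^ (0:ℕ))⁻¹ * Phi3 1 (c - ((0 : ℕ) : ℝ)) w z) := by rw [hR]
          _ = _ := by ring
      have hB1 : ((n' + 1 : ℕ) : ℝ) * z * ((z ^ (0 + 1))⁻¹ * Acoef (n' + 2) c z (0 + 1) * Phi3 1 (c - ((0 + 1 : ℕ) : ℝ)) w z)
          = -((c - 2) * ((z ^ (0))⁻¹ * Acoef (n' + 1) (c - 1) z (0) * Phi3 1 (c - 1 - ((0 : ℕ) : ℝ)) w z))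
            - z * ((z ^ (0 + 1))⁻¹ * Acoef (n' + 1) c z (0 + 1) * Phi3 1 (c - ((0 + 1 : ℕ) : ℝ)) w z) := by
        have hR := Acoef_succ1 n' c z
        rw [show (0:ℕ) + 1 = 1 by omega]
        have e : c - 1 - ((0 : ℕ) : ℝ) = c - ((1 : ℕ) : ℝ) := by push_cast; ring
        rw [e]
        calc ((n' + 1 : ℕ) : ℝ) * z * ((z ^ (1))⁻¹ * Acoef (n' + 2) c z (1) * Phi3 1 (c - ((1 : ℕ) : ℝ)) w z)
            = (((n' + 1 : ℕ) : ℝ) * Acoef (n' + 2) c z 1) *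
                (z * (z ^ (1:ℕ))⁻¹ * Phi3 1 (c - ((1 : ℕ) : ℝ)) w z) := by ring
          _ = (-(c - 2) * Acoef (n' + 1) (c - 1) z 0 - Acoef (n' + 1) c z 1) *
                (z * (z ^ (1:ℕ))⁻¹ * Phi3 1 (c - ((1 : ℕ) : ℝ)) w z) := by rw [hR]
          _ = _ := by
              have : (z ^ (1:ℕ))⁻¹ = z⁻¹ := by rw [pow_one]
              rw [this]
              field_simp
      -- the key sum identity
      have hkey : ((n' + 1 : ℕ) : ℝ) * z *
            (∑ i ∈ Finset.range (2 * n' + 3),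
              (z ^ i)⁻¹ * Acoef (n' + 2) c z i * Phi3 1 (c - i) w z)
          = (∑ i ∈ Finset.range (2 * n' + 3),
                (z ^ i)⁻¹ * Acoef (n' + 1) (c - 2) z i * Phi3 1 (c - 2 - i) w z)
            - (c - 2) * (∑ i ∈ Finset.range (2 * n' + 3),
                (z ^ i)⁻¹ * Acoef (n' + 1) (c - 1) z i * Phi3 1 (c - 1 - i) w z)
            - z * (∑ i ∈ Finset.range (2 * n' + 3),
                (z ^ i)⁻¹ * Acoef (n' + 1) c z i * Phi3 1 (c - i) w z) := by
        rw [Finset.mul_sum]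
        have dX : (∑ i ∈ Finset.range (2 * n' + 3),
              ((n' + 1 : ℕ) : ℝ) * z * ((z ^ i)⁻¹ * Acoef (n' + 2) c z i * Phi3 1 (c - i) w z))
            = (∑ i ∈ Finset.range (2 * n' + 1), ((n' + 1 : ℕ) : ℝ) * z * ((z ^ (i + 1 + 1))⁻¹ * Acoef (n' + 2) c z (i + 1 + 1) * Phi3 1 (c - ((i + 1 + 1 : ℕ) : ℝ)) w z))
              + ((n' + 1 : ℕ) : ℝ) * z * ((z ^ (0 + 1))⁻¹ * Acoef (n' + 2) c z (0 + 1) * Phi3 1 (c - ((0 + 1 : ℕ) : ℝ)) w z) + ((n' + 1 : ℕ) : ℝ) * z * ((z ^ (0))⁻¹ * Acoef (n' + 2) c z (0) * Phi3 1 (c - ((0 : ℕ) : ℝ)) w z) := by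
          rw [show 2 * n' + 3 = (2 * n' + 1 + 1) + 1 by omega, Finset.sum_range_succ',
            Finset.sum_range_succ']
        have d1 : (∑ i ∈ Finset.range (2 * n' + 3),
              (z ^ i)⁻¹ * Acoef (n' + 1) (c - 2) z i * Phi3 1 (c - 2 - i) w z)
            = (∑ i ∈ Finset.range (2 * n' + 1), (z ^ (i))⁻¹ * Acoef (n' + 1) (c - 2) z (i) * Phi3 1 (c - 2 - ((i : ℕ) : ℝ)) w z)
              + (z ^ (2 * n' + 1))⁻¹ * Acoef (n' + 1) (c - 2) z (2 * n' + 1) * Phi3 1 (c - 2 - ((2 * n' + 1 : ℕ) : ℝ)) w z + (z ^ (2 * n' + 1 + 1))⁻¹ * Acoef (n' + 1) (c - 2) z (2 * n' + 1 + 1) * Phi3 1 (c - 2 - ((2 * n' + 1 + 1 : ℕ) : ℝ)) w z := by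
          rw [show 2 * n' + 3 = (2 * n' + 1 + 1) + 1 by omega, Finset.sum_range_succ,
            Finset.sum_range_succ]
        have d2 : (∑ i ∈ Finset.range (2 * n' + 3),
              (z ^ i)⁻¹ * Acoef (n' + 1) (c - 1) z i * Phi3 1 (c - 1 - i) w z)
            = ((∑ i ∈ Finset.range (2 * n' + 1), (z ^ (i + 1))⁻¹ * Acoef (n' + 1) (c - 1) z (i + 1) * Phi3 1 (c - 1 - ((i + 1 : ℕ) : ℝ)) w z)
              + (z ^ (0))⁻¹ * Acoef (n' + 1) (c - 1) z (0) * Phi3 1 (c - 1 - ((0 : ℕ) : ℝ)) w z) + (z ^ (2 * n' + 1 + 1))⁻¹ * Acoef (n' + 1) (c - 1) z (2 * n' + 1 + 1) * Phi3 1 (c - 1 - ((2 * n' + 1 + 1 : ℕ) : ℝ)) w z := by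
          rw [show 2 * n' + 3 = (2 * n' + 1 + 1) + 1 by omega, Finset.sum_range_succ,
            Finset.sum_range_succ']
        have d3 : (∑ i ∈ Finset.range (2 * n' + 3),
              (z ^ i)⁻¹ * Acoef (n' + 1) c z i * Phi3 1 (c - i) w z)
            = (∑ i ∈ Finset.range (2 * n' + 1), (z ^ (i + 1 + 1))⁻¹ * Acoef (n' + 1) c z (i + 1 + 1) * Phi3 1 (c - ((i + 1 + 1 : ℕ) : ℝ)) w z)
              + (z ^ (0 + 1))⁻¹ * Acoef (n' + 1) c z (0 + 1) * Phi3 1 (c - ((0 + 1 : ℕ) : ℝ)) w z + (z ^ (0))⁻¹ * Acoef (n' + 1) c z (0) * Phi3 1 (c - ((0 : ℕ) : ℝ)) w z := by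
          rw [show 2 * n' + 3 = (2 * n' + 1 + 1) + 1 by omega, Finset.sum_range_succ',
            Finset.sum_range_succ']
        rw [dX, d1, d2, d3]
        have hc : (∑ i ∈ Finset.range (2 * n' + 1), ((n' + 1 : ℕ) : ℝ) * z * ((z ^ (i + 1 + 1))⁻¹ * Acoef (n' + 2) c z (i + 1 + 1) * Phi3 1 (c - ((i + 1 + 1 : ℕ) : ℝ)) w z))
            = ∑ i ∈ Finset.range (2 * n' + 1),
                ((z ^ (i))⁻¹ * Acoef (n' + 1) (c - 2) z (i) * Phi3 1 (c - 2 - ((i : ℕ) : ℝ)) w z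
                  - (c - 2) * ((z ^ (i + 1))⁻¹ * Acoef (n' + 1) (c - 1) z (i + 1) * Phi3 1 (c - 1 - ((i + 1 : ℕ) : ℝ)) w z)
                  - z * ((z ^ (i + 1 + 1))⁻¹ * Acoef (n' + 1) c z (i + 1 + 1) * Phi3 1 (c - ((i + 1 + 1 : ℕ) : ℝ)) w z)) :=
          Finset.sum_congr rfl (fun i _ => hper i)
        rw [hc, hB0, hB1]
        rw [Acoef_vanish (n' + 1) (by omega) (c - 2) z (2 * n' + 1) (by omega),
          Acoef_vanish (n' + 1) (by omega) (c - 2) z (2 * n' + 1 + 1) (by omega),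
          Acoef_vanish (n' + 1) (by omega) (c - 1) z (2 * n' + 1 + 1) (by omega)]
        rw [Finset.sum_sub_distrib, Finset.sum_sub_distrib, ← Finset.mul_sum, ← Finset.mul_sum]
        ring
      -- put it together
      have hL3 := phi3_L3 ((n' + 1 : ℕ) : ℝ) c w z
      have hcast : ((n' + 1 + 1 : ℕ) : ℝ) = ((n' + 1 : ℕ) : ℝ) + 1 := by push_cast; ring
      rw [hcast]
      apply mul_left_cancel₀ hnw
      rw [hL3, IHext (c - 2), IHext (c - 1), IHext c]
      rw [show 2 * (n' + 1) + 1 = 2 * n' + 3 by omega]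
      calc (z / w) ^ n' * ∑ i ∈ Finset.range (2 * n' + 3),
              (z ^ i)⁻¹ * Acoef (n' + 1) (c - 2) z i * Phi3 1 (c - 2 - i) w z
            - (c - 2) * ((z / w) ^ n' * ∑ i ∈ Finset.range (2 * n' + 3),
              (z ^ i)⁻¹ * Acoef (n' + 1) (c - 1) z i * Phi3 1 (c - 1 - i) w z)
            - z * ((z / w) ^ n' * ∑ i ∈ Finset.range (2 * n' + 3),
              (z ^ i)⁻¹ * Acoef (n' + 1) c z i * Phi3 1 (c - i) w z)
          = (z / w) ^ n' * (((n' + 1 : ℕ) : ℝ) * z *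
              ∑ i ∈ Finset.range (2 * n' + 3),
                (z ^ i)⁻¹ * Acoef (n' + 2) c z i * Phi3 1 (c - i) w z) := by
            rw [hkey]; ring
        _ = ((n' + 1 : ℕ) : ℝ) * w * ((z / w) ^ (n' + 1) *
              ∑ i ∈ Finset.range (2 * n' + 3),
                (z ^ i)⁻¹ * Acoef (n' + 2) c z i * Phi3 1 (c - i) w z) := by
            rw [pow_succ]
            field_simp
        _ = _ := by
            rw [show n' + 1 + 1 = n' + 2 by omega]
  obtain ⟨n, rfl⟩ : ∃ n, b = n + 1 := ⟨b - 1, by omega⟩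
  exact main n c
end

section
/- For a > 0, b > 0, and any real m, the generalized Marcum-Q function admits the representation Q_m(a,b) = 1 − (b²/2)^m · exp(−(a²+b²)/2) · Φ̃₃(1, m+1; b²/2, a²b²/4). -/
open scoped BigOperators
open MeasureTheory

open MeasureTheory Set
set_option maxHeartbeats 1000000

noncomputable def Iup (s u : ℝ) : ℝ := ∫ t in Set.Ioi u, t ^ (s-1) * Real.exp (-t)
noncomputable def Tg (s u : ℝ) : ℝ := ∑' k : ℕ, u ^ k * (Real.Gamma (s + 1 + k))⁻¹

lemma iup_integrable {u : ℝ} (hu : 0 < u) (s : ℝ) :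
    IntegrableOn (fun t : ℝ => t ^ (s-1) * Real.exp (-t)) (Set.Ioi u) := by
  rcases le_or_gt 1 s with hs | hs
  · have h0 : (0:ℝ) < s := lt_of_lt_of_le one_pos hs
    have := (Real.GammaIntegral_convergent h0).mono_set
      (Set.Ioi_subset_Ioi hu.le)
    exact this.congr_fun (fun x _ => mul_comm _ _) measurableSet_Ioi
  · have hmeas : AEStronglyMeasurable (fun t : ℝ => t ^ (s-1) * Real.exp (-t))
        (volume.restrict (Set.Ioi u)) :=
      by
        refine (ContinuousOn.mul ?_ (Real.continuous_exp.comp continuous_neg).continuousOn).aestronglyMeasurable measurableSet_Ioi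
        intro t ht
        exact (Real.continuousAt_rpow_const t _ (Or.inl (ne_of_gt (lt_trans hu ht)))).continuousWithinAt
    have hint : IntegrableOn (fun t : ℝ => u ^ (s-1) * Real.exp (-t)) (Set.Ioi u) := by
      have := (exp_neg_integrableOn_Ioi u (zero_lt_one)).const_mul (u ^ (s-1))
      simp only [neg_mul, one_mul] at this
      exact this
    refine Integrable.mono hint hmeas ?_
    filter_upwards [ae_restrict_mem measurableSet_Ioi] with t ht
    have htpos : 0 < t := lt_trans hu ht
    have h1 : t ^ (s-1) ≤ u ^ (s-1) :=
      Real.rpow_le_rpow_of_nonpos hu (le_of_lt ht) (by linarith)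
    have h2 : (0:ℝ) < t ^ (s-1) := Real.rpow_pos_of_pos htpos _
    rw [Real.norm_of_nonneg (by positivity), Real.norm_of_nonneg (by positivity)]
    exact mul_le_mul_of_nonneg_right h1 (Real.exp_pos _).le

lemma gamma_inv_succ (s : ℝ) : (Real.Gamma s)⁻¹ = s * (Real.Gamma (s+1))⁻¹ := by
  rcases eq_or_ne s 0 with rfl | hs
  · simp [Real.Gamma_zero]
  · rw [Real.Gamma_add_one hs, mul_inv]
    rcases eq_or_ne (Real.Gamma s) 0 with h | h
    · simp [h]
    · field_simp

lemma iup_rec {u : ℝ} (hu : 0 < u) (s : ℝ) :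
    Iup (s+1) u = s * Iup s u + u ^ s * Real.exp (-u) := by
  have hderiv : ∀ x ∈ Set.Ici u, HasDerivAt (fun x : ℝ => -(x ^ s * Real.exp (-x)))
      (x ^ s * Real.exp (-x) - s * (x ^ (s-1) * Real.exp (-x))) x := by
    intro x hx
    have hx0 : x ≠ 0 := (lt_of_lt_of_le hu hx).ne'
    have h1 : HasDerivAt (fun x : ℝ => x ^ s) (s * x ^ (s-1)) x :=
      Real.hasDerivAt_rpow_const (Or.inl hx0)
    have h2 : HasDerivAt (fun x : ℝ => Real.exp (-x)) (-Real.exp (-x)) x := by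
      simpa using ((hasDerivAt_neg x).exp)
    refine (HasDerivAt.neg (h1.mul h2)).congr_deriv ?_
    ring
  have f'int : IntegrableOn
      (fun x : ℝ => x ^ s * Real.exp (-x) - s * (x ^ (s-1) * Real.exp (-x)))
      (Set.Ioi u) := by
    have h1 := iup_integrable hu (s+1)
    simp only [add_sub_cancel_right] at h1
    exact h1.sub ((iup_integrable hu s).const_mul s)
  have htend : Filter.Tendsto (fun x : ℝ => -(x ^ s * Real.exp (-x)))
      Filter.atTop (nhds 0) := by
    have := tendsto_rpow_mul_exp_neg_mul_atTop_nhds_zero s 1 one_pos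
    simp only [neg_mul, one_mul] at this
    simpa using this.neg
  have key := integral_Ioi_of_hasDerivAt_of_tendsto' hderiv f'int htend
  have hsub : ∫ x in Set.Ioi u, (x ^ s * Real.exp (-x) - s * (x ^ (s-1) * Real.exp (-x)))
      = Iup (s+1) u - s * Iup s u := by
    have h1 := iup_integrable hu (s+1)
    simp only [add_sub_cancel_right] at h1
    rw [integral_sub h1 ((iup_integrable hu s).const_mul s), integral_const_mul]
    simp [Iup, add_sub_cancel_right]
  rw [hsub] at key
  linarith [key]

noncomputable def Ilo (s u : ℝ) : ℝ := ∫ t in Set.Ioc 0 u, t ^ (s-1) * Real.exp (-t)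

lemma gamma_split {s u : ℝ} (hs : 0 < s) (hu : 0 < u) :
    Real.Gamma s = Ilo s u + Iup s u := by
  rw [Real.Gamma_eq_integral hs]
  have hcongr : ∫ x in Set.Ioi (0:ℝ), Real.exp (-x) * x ^ (s-1)
      = ∫ x in Set.Ioi (0:ℝ), x ^ (s-1) * Real.exp (-x) :=
    setIntegral_congr_fun measurableSet_Ioi (fun x _ => mul_comm _ _)
  rw [hcongr]
  have hunion : Set.Ioc 0 u ∪ Set.Ioi u = Set.Ioi (0:ℝ) := Set.Ioc_union_Ioi_eq_Ioi hu.le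
  have hint : IntegrableOn (fun x : ℝ => x ^ (s-1) * Real.exp (-x)) (Set.Ioi 0) :=
    (Real.GammaIntegral_convergent hs).congr_fun (fun x _ => mul_comm _ _) measurableSet_Ioi
  rw [← hunion, setIntegral_union (Set.Ioc_disjoint_Ioi le_rfl) measurableSet_Ioi
    (hint.mono_set (hunion ▸ Set.subset_union_left))
    (hint.mono_set (hunion ▸ Set.subset_union_right))]
  rfl

lemma fact_mul_gamma_le {x : ℝ} (hx : 1 ≤ x) (n : ℕ) :
    (n.factorial : ℝ) * Real.Gamma x ≤ Real.Gamma (x + n) := by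
  induction n with
  | zero => simp
  | succ n ih =>
    have hxn : (0:ℝ) < x + n := by positivity
    have h1 : Real.Gamma (x + ((n : ℕ)+1 : ℕ)) = (x + n) * Real.Gamma (x + n) := by
      rw [show (x + ((n:ℕ)+1:ℕ) : ℝ) = (x + n) + 1 by push_cast; ring,
        Real.Gamma_add_one hxn.ne']
    rw [h1]
    have h2 : ((n+1 : ℕ) : ℝ) * ((n.factorial : ℝ) * Real.Gamma x) ≤ (x + n) * Real.Gamma (x + n) := by
      apply mul_le_mul
      · push_cast; linarith
      · exact ih
      · positivity
      · positivity
    calc ((n+1).factorial : ℝ) * Real.Gamma x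
        = ((n+1:ℕ) : ℝ) * ((n.factorial : ℝ) * Real.Gamma x) := by
          rw [Nat.factorial_succ]; push_cast; ring
      _ ≤ _ := h2

lemma fact_le_fact_mul_pow (q N : ℕ) : (q + N).factorial ≤ q.factorial * (q + N) ^ N := by
  induction N with
  | zero => simp
  | succ N ih =>
    have h1 : (q + (N+1)).factorial = (q + N + 1) * (q + N).factorial := by
      rw [show q + (N+1) = (q + N) + 1 by ring, Nat.factorial_succ]
    rw [h1]
    calc (q + N + 1) * (q + N).factorial ≤ (q + N + 1) * (q.factorial * (q + N) ^ N) :=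
          Nat.mul_le_mul_left _ ih
      _ ≤ (q + N + 1) * (q.factorial * (q + N + 1) ^ N) := by
          apply Nat.mul_le_mul_left
          apply Nat.mul_le_mul_left
          exact Nat.pow_le_pow_left (Nat.le_succ _) N
      _ = q.factorial * (q + (N+1)) ^ (N+1) := by ring_nf

lemma gammaInv_bound (c : ℝ) : ∃ C D : ℝ, 0 ≤ C ∧ 1 ≤ D ∧
    ∀ n : ℕ, |(Real.Gamma (c + n))⁻¹| ≤ C * D ^ n / n.factorial := by
  set N : ℕ := ⌈|c|⌉₊ + 1 with hN
  have hcN : 1 ≤ c + N := by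
    have h1 : |c| ≤ ⌈|c|⌉₊ := Nat.le_ceil _
    have h2 : -c ≤ |c| := neg_le_abs c
    have : (N : ℝ) = (⌈|c|⌉₊ : ℝ) + 1 := by push_cast [hN]; ring
    linarith
  set D : ℝ := 2 ^ N with hD
  have hD1 : 1 ≤ D := one_le_pow₀ (by norm_num)
  set C : ℝ := (Real.Gamma (c + N))⁻¹ +
    ∑ n ∈ Finset.range N, |(Real.Gamma (c + n))⁻¹| * n.factorial with hC
  have hgampos : 0 < Real.Gamma (c + N) := Real.Gamma_pos_of_pos (by linarith)
  have hsumnn : 0 ≤ ∑ n ∈ Finset.range N, |(Real.Gamma (c + n))⁻¹| * n.factorial :=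
    Finset.sum_nonneg fun i _ => by positivity
  have hC0 : 0 ≤ C := by rw [hC]; positivity
  refine ⟨C, D, hC0, hD1, fun n => ?_⟩
  have hfacpos : (0:ℝ) < n.factorial := by positivity
  rcases lt_or_ge n N with hn | hn
  · -- small n
    have h1 : |(Real.Gamma (c + n))⁻¹| * n.factorial ≤ C := by
      rw [hC]
      have := Finset.single_le_sum
        (f := fun i : ℕ => |(Real.Gamma (c + i))⁻¹| * (i.factorial : ℝ))
        (fun i _ => by positivity) (Finset.mem_range.mpr hn)
      linarith [inv_nonneg.mpr hgampos.le]
    rw [le_div_iff₀ hfacpos]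
    have hDn : (1:ℝ) ≤ D ^ n := one_le_pow₀ hD1
    calc |(Real.Gamma (c + n))⁻¹| * n.factorial ≤ C := h1
      _ ≤ C * D ^ n := le_mul_of_one_le_right hC0 hDn
  · -- large n
    set q : ℕ := n - N with hq
    have hnq : n = N + q := by omega
    have hgam : (q.factorial : ℝ) * Real.Gamma (c + N) ≤ Real.Gamma (c + n) := by
      have := fact_mul_gamma_le hcN q
      have harg : (c + N) + q = c + n := by rw [hnq]; push_cast; ring
      rwa [harg] at this
    have hpos : 0 < Real.Gamma (c + n) :=
      lt_of_lt_of_le (by positivity) hgam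
    have hfact : (n.factorial : ℝ) ≤ q.factorial * D ^ n := by
      have h1 : n.factorial ≤ q.factorial * n ^ N := by
        have := fact_le_fact_mul_pow q N
        rw [show q + N = n by omega] at this
        exact this
      have h2 : n ^ N ≤ (2 ^ n) ^ N := Nat.pow_le_pow_left (Nat.lt_two_pow_self (n := n)).le N
      have h3 : ((2:ℕ) ^ n) ^ N = (2 ^ N) ^ n := by rw [← pow_mul, ← pow_mul, Nat.mul_comm]
      have : n.factorial ≤ q.factorial * (2 ^ N) ^ n := by
        calc n.factorial ≤ q.factorial * n ^ N := h1
          _ ≤ q.factorial * (2 ^ n) ^ N := Nat.mul_le_mul_left _ h2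
          _ = q.factorial * (2 ^ N) ^ n := by rw [h3]
      calc (n.factorial : ℝ) ≤ (q.factorial * (2 ^ N) ^ n : ℕ) := by exact_mod_cast this
        _ = q.factorial * D ^ n := by push_cast [hD]; ring
    have habs : |(Real.Gamma (c + n))⁻¹| = (Real.Gamma (c + n))⁻¹ :=
      abs_of_pos (by positivity)
    rw [habs]
    have hCge : (Real.Gamma (c + N))⁻¹ ≤ C := by rw [hC]; linarith
    have key : (Real.Gamma (c + n))⁻¹ ≤ (Real.Gamma (c + N))⁻¹ / q.factorial := by
      rw [div_eq_mul_inv, ← mul_inv]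
      apply inv_anti₀ (by positivity)
      calc Real.Gamma (c + N) * q.factorial = q.factorial * Real.Gamma (c + N) := by ring
        _ ≤ Real.Gamma (c + n) := hgam
    calc (Real.Gamma (c + n))⁻¹ ≤ (Real.Gamma (c + N))⁻¹ / q.factorial := key
      _ ≤ C * D ^ n / n.factorial := by
          rw [div_le_div_iff₀ (by positivity) hfacpos]
          calc (Real.Gamma (c + N))⁻¹ * n.factorial
              ≤ (Real.Gamma (c + N))⁻¹ * (q.factorial * D ^ n) :=
                mul_le_mul_of_nonneg_left hfact (by positivity)
            _ = ((Real.Gamma (c + N))⁻¹ * q.factorial) * D ^ n := by ring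
            _ ≤ (C * q.factorial) * D ^ n := by
                apply mul_le_mul_of_nonneg_right _ (by positivity)
                exact mul_le_mul_of_nonneg_right hCge (by positivity)
            _ = C * D ^ n * q.factorial := by ring

lemma tg_summable {u : ℝ} (hu : 0 ≤ u) (s : ℝ) :
    Summable (fun k : ℕ => u ^ k * (Real.Gamma (s + 1 + k))⁻¹) := by
  obtain ⟨C, D, hC, hD, hbound⟩ := gammaInv_bound (s + 1)
  have hsum : Summable (fun k : ℕ => C * ((u * D) ^ k / k.factorial)) :=
    (Real.summable_pow_div_factorial (u * D)).mul_left C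
  apply Summable.of_norm_bounded hsum
  intro k
  rw [Real.norm_eq_abs, abs_mul, abs_pow, abs_of_nonneg hu]
  calc u ^ k * |(Real.Gamma (s + 1 + k))⁻¹| ≤ u ^ k * (C * D ^ k / k.factorial) :=
      mul_le_mul_of_nonneg_left (hbound k) (by positivity)
    _ = C * ((u * D) ^ k / k.factorial) := by rw [mul_pow]; ring

lemma tg_shift {u : ℝ} (hu : 0 ≤ u) (s : ℝ) :
    Tg s u = (Real.Gamma (s + 1))⁻¹ + u * Tg (s + 1) u := by
  rw [Tg, Summable.tsum_eq_zero_add (tg_summable hu s)]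
  have h0 : u ^ (0:ℕ) * (Real.Gamma (s + 1 + (0:ℕ)))⁻¹ = (Real.Gamma (s + 1))⁻¹ := by
    norm_num
  rw [h0]
  congr 1
  rw [Tg, ← tsum_mul_left]
  apply tsum_congr
  intro k
  rw [show (s + 1 + ((k+1 : ℕ) : ℝ)) = s + 1 + 1 + k by push_cast; ring, pow_succ]
  ring

lemma ilo_integrable {t u : ℝ} (ht : 0 < t) :
    IntegrableOn (fun x : ℝ => x ^ (t-1) * Real.exp (-x)) (Set.Ioc 0 u) :=
  ((Real.GammaIntegral_convergent ht).congr_fun (fun x _ => mul_comm _ _)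
    measurableSet_Ioi).mono_set Set.Ioc_subset_Ioi_self

lemma ilo_nonneg {t u : ℝ} : 0 ≤ Ilo t u :=
  setIntegral_nonneg measurableSet_Ioc fun x hx => by
    have : 0 < x := hx.1
    positivity

lemma ilo_rec {u : ℝ} (hu : 0 < u) {t : ℝ} (ht : 0 < t) :
    Ilo (t+1) u = t * Ilo t u - u ^ t * Real.exp (-u) := by
  have h1 := gamma_split ht hu
  have h2 := gamma_split (by linarith : (0:ℝ) < t + 1) hu
  have h3 := iup_rec hu t
  have h4 : Real.Gamma (t+1) = t * Real.Gamma t := Real.Gamma_add_one ht.ne'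
  have h5 : Ilo (t+1) u = Real.Gamma (t+1) - Iup (t+1) u := by linarith
  rw [h5, h4, h3, h1]; ring

lemma ilo_le {u : ℝ} (hu : 0 < u) {t : ℝ} (ht : 0 < t) :
    Ilo t u ≤ u ^ t / t := by
  have hle : Ilo t u ≤ ∫ x in Set.Ioc (0:ℝ) u, x ^ (t-1) := by
    apply setIntegral_mono_on (ilo_integrable ht) _ measurableSet_Ioc
    · intro x hx
      have hx0 : 0 < x := hx.1
      nth_rewrite 2 [show x ^ (t-1) = x ^ (t-1) * 1 by ring]
      apply mul_le_mul_of_nonneg_left _ (by positivity)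
      exact Real.exp_le_one_iff.mpr (by linarith)
    · have : IntervalIntegrable (fun x : ℝ => x ^ (t-1)) volume 0 u :=
        intervalIntegral.intervalIntegrable_rpow' (by linarith)
      rw [intervalIntegrable_iff_integrableOn_Ioc_of_le hu.le] at this
      exact this
  have heq : ∫ x in Set.Ioc (0:ℝ) u, x ^ (t-1) = u ^ t / t := by
    rw [← intervalIntegral.integral_of_le hu.le,
      integral_rpow (Or.inl (by linarith : (-1:ℝ) < t - 1))]
    rw [sub_add_cancel, Real.zero_rpow ht.ne']
    ring
  linarith

lemma l4_anchor {u : ℝ} (hu : 0 < u) {s : ℝ} (hs : 0 < s) :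
    (Real.Gamma s)⁻¹ * Iup s u = 1 - u ^ s * Real.exp (-u) * Tg s u := by
  have TC : ∀ K : ℕ, (Real.Gamma s)⁻¹ * Ilo s u =
      (∑ k ∈ Finset.range K, u ^ s * Real.exp (-u) * (u ^ k * (Real.Gamma (s+1+k))⁻¹))
        + (Real.Gamma (s + (K:ℕ)))⁻¹ * Ilo (s + (K:ℕ)) u := by
    intro K
    induction K with
    | zero => simp
    | succ K ih =>
      have stK : (0:ℝ) < s + K := by positivity
      have hrec := ilo_rec hu stK
      have hginv := gamma_inv_succ (s + K)
      have hupow : u ^ (s + (K:ℝ)) = u ^ s * u ^ (K:ℕ) := by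
        rw [Real.rpow_add hu, Real.rpow_natCast]
      rw [Finset.sum_range_succ, ih]
      have hcast : (s + ((K+1:ℕ):ℝ)) = s + K + 1 := by push_cast; ring
      have harg : s + 1 + (K:ℝ) = s + (K:ℝ) + 1 := by ring
      rw [hcast, harg, hrec, hginv]
      rw [hupow] at hrec ⊢
      ring
  have hsummable := tg_summable hu.le s
  have hterm : Filter.Tendsto (fun K : ℕ => (Real.Gamma (s+(K:ℕ)))⁻¹ * Ilo (s+(K:ℕ)) u)
      Filter.atTop (nhds 0) := by
    have h0 : ∀ K : ℕ, 0 ≤ (Real.Gamma (s+(K:ℕ)))⁻¹ * Ilo (s+(K:ℕ)) u := fun K =>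
      mul_nonneg (inv_nonneg.mpr (Real.Gamma_pos_of_pos (by positivity)).le) ilo_nonneg
    have hb : ∀ K : ℕ, (Real.Gamma (s+(K:ℕ)))⁻¹ * Ilo (s+(K:ℕ)) u
        ≤ u ^ s * (u ^ (K:ℕ) * (Real.Gamma (s+1+(K:ℕ)))⁻¹) := by
      intro K
      have stK : (0:ℝ) < s + K := by positivity
      have h1 : Ilo (s+(K:ℕ)) u ≤ u ^ (s + (K:ℝ)) / (s + K) := ilo_le hu stK
      have h2 : (Real.Gamma (s+(K:ℕ)))⁻¹ * Ilo (s+(K:ℕ)) u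
          ≤ (Real.Gamma (s+(K:ℕ)))⁻¹ * (u ^ (s + (K:ℝ)) / (s + K)) :=
        mul_le_mul_of_nonneg_left h1 (inv_nonneg.mpr (Real.Gamma_pos_of_pos stK).le)
      have hupow : u ^ (s + (K:ℝ)) = u ^ s * u ^ (K:ℕ) := by
        rw [Real.rpow_add hu, Real.rpow_natCast]
      have hginv := gamma_inv_succ (s + K)
      have harg : s + 1 + (K:ℝ) = s + (K:ℝ) + 1 := by ring
      rw [harg]
      calc (Real.Gamma (s+(K:ℕ)))⁻¹ * Ilo (s+(K:ℕ)) u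
          ≤ (Real.Gamma (s+(K:ℕ)))⁻¹ * (u ^ (s + (K:ℝ)) / (s + K)) := h2
        _ = u ^ s * (u ^ (K:ℕ) * (Real.Gamma (s + (K:ℝ) + 1))⁻¹) := by
            rw [hginv, hupow]; field_simp
    have htendb : Filter.Tendsto
        (fun K : ℕ => u ^ s * (u ^ (K:ℕ) * (Real.Gamma (s+1+(K:ℕ)))⁻¹))
        Filter.atTop (nhds 0) := by
      have := hsummable.tendsto_atTop_zero.const_mul (u ^ s)
      simpa using this
    exact squeeze_zero h0 hb htendb
  have hps : Filter.Tendsto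
      (fun K : ℕ => ∑ k ∈ Finset.range K, u ^ s * Real.exp (-u) * (u ^ k * (Real.Gamma (s+1+k))⁻¹))
      Filter.atTop (nhds (u ^ s * Real.exp (-u) * Tg s u)) :=
    (hsummable.hasSum.mul_left (u ^ s * Real.exp (-u))).tendsto_sum_nat
  have hlim := (hps.add hterm).congr (fun K => (TC K).symm)
  have hIlo : (Real.Gamma s)⁻¹ * Ilo s u = u ^ s * Real.exp (-u) * Tg s u + 0 :=
    tendsto_nhds_unique tendsto_const_nhds hlim
  have hsplit := gamma_split hs hu
  have hγ : Real.Gamma s ≠ 0 := (Real.Gamma_pos_of_pos hs).ne'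
  have h3 : (Real.Gamma s)⁻¹ * Iup s u
      = (Real.Gamma s)⁻¹ * Real.Gamma s - (Real.Gamma s)⁻¹ * Ilo s u := by
    rw [hsplit]; ring
  rw [h3, inv_mul_cancel₀ hγ, hIlo]; ring

lemma gamma_inv_iup {u : ℝ} (hu : 0 < u) (s : ℝ) :
    (Real.Gamma s)⁻¹ * Iup s u = 1 - u ^ s * Real.exp (-u) * Tg s u := by
  obtain ⟨n, hn⟩ : ∃ n : ℕ, 0 < s + n := by
    refine ⟨⌈-s⌉₊ + 1, ?_⟩
    have := Nat.le_ceil (-s)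
    push_cast
    linarith
  induction n generalizing s with
  | zero => exact l4_anchor hu (by simpa using hn)
  | succ n ih =>
    have hstep := ih (s+1) (by push_cast at hn ⊢; linarith)
    have hrec := iup_rec hu s
    have hginv := gamma_inv_succ s
    have hshift := tg_shift hu.le s
    have hupow : u ^ (s+1) = u ^ s * u := Real.rpow_add_one hu.ne' s
    rw [hrec, hupow] at hstep
    rw [hginv, hshift]
    linear_combination hstep

lemma sq_image {b : ℝ} (hb : 0 < b) :
    (fun x : ℝ => x^2/2) '' Set.Ioi b = Set.Ioi (b^2/2) := by
  ext y
  constructor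
  · rintro ⟨x, hx, rfl⟩
    simp only [Set.mem_Ioi] at *
    nlinarith
  · intro hy
    simp only [Set.mem_Ioi] at hy
    refine ⟨Real.sqrt (2*y), ?_, ?_⟩
    · simp only [Set.mem_Ioi]
      have h1 : b = Real.sqrt (b^2) := (Real.sqrt_sq hb.le).symm
      rw [h1]
      exact Real.sqrt_lt_sqrt (by positivity) (by linarith)
    · have : Real.sqrt (2*y) ^ 2 = 2*y := Real.sq_sqrt (by nlinarith)
      simp only [this]
      ring

lemma sq_hasDeriv {b : ℝ} : ∀ x ∈ Set.Ioi b,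
    HasDerivWithinAt (fun x : ℝ => x^2/2) x (Set.Ioi b) x := by
  intro x _
  have : HasDerivAt (fun x : ℝ => x^2/2) x x := by
    simpa using (hasDerivAt_pow 2 x).div_const 2
  exact this.hasDerivWithinAt

lemma sq_injOn {b : ℝ} (hb : 0 < b) : Set.InjOn (fun x : ℝ => x^2/2) (Set.Ioi b) := by
  intro x hx y hy hxy
  simp only [Set.mem_Ioi] at hx hy
  simp only at hxy
  have h3 : (x - y) * (x + y) = 0 := by nlinarith
  rcases mul_eq_zero.mp h3 with h | h
  · linarith
  · linarith

lemma subst_integral {b : ℝ} (hb : 0 < b) (g : ℝ → ℝ) :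
    ∫ t in Set.Ioi (b^2/2), g t = ∫ x in Set.Ioi b, x * g (x^2/2) := by
  have h := integral_image_eq_integral_abs_deriv_smul measurableSet_Ioi
    (sq_hasDeriv) (sq_injOn hb) g
  rw [sq_image hb] at h
  rw [h]
  apply setIntegral_congr_fun measurableSet_Ioi
  intro x hx
  have : 0 < x := lt_trans hb hx
  simp [abs_of_pos this, smul_eq_mul]

lemma subst_integrable {b : ℝ} (hb : 0 < b) (g : ℝ → ℝ)
    (hg : IntegrableOn g (Set.Ioi (b^2/2))) :
    IntegrableOn (fun x => x * g (x^2/2)) (Set.Ioi b) := by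
  have h := (integrableOn_image_iff_integrableOn_abs_deriv_smul measurableSet_Ioi
    (sq_hasDeriv) (sq_injOn hb) g)
  rw [sq_image hb] at h
  have h2 := h.mp hg
  apply h2.congr_fun _ measurableSet_Ioi
  intro x hx
  have : 0 < x := lt_trans hb hx
  simp [abs_of_pos this, smul_eq_mul]

noncomputable def mqTerm (m a : ℝ) (j : ℕ) (x : ℝ) : ℝ :=
  (Real.exp (-(a^2/2)) * (a^2/2)^j * (Real.Gamma (m+j))⁻¹ / j.factorial) *
    (x * ((x^2/2)^(m+(j:ℝ)-1) * Real.exp (-(x^2/2))))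

lemma integrand_eq_tsum {m a b : ℝ} (ha : 0 < a) (hb : 0 < b) {x : ℝ} (hx : b < x) :
    x ^ m / a ^ (m - 1) * Real.exp (-(a ^ 2 + x ^ 2) / 2) * besselIR (m - 1) (a * x)
      = ∑' j : ℕ, mqTerm m a j x := by
  have hx0 : 0 < x := lt_trans hb hx
  have hax : 0 < a * x / 2 := by positivity
  rw [besselIR, ← tsum_mul_left]
  apply tsum_congr
  intro j
  have h1 : ((j:ℝ) + (m-1) + 1) = m + j := by ring
  have h3 : (a*x/2) ^ (2*(j:ℝ)+(m-1)) = (a*x/2)^(2*j : ℕ) * (a*x/2)^(m-1) := by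
    rw [← Real.rpow_natCast (a*x/2) (2*j), ← Real.rpow_add hax]
    congr 1
    push_cast
    ring
  have h4 : (x^2/2) ^ (m+(j:ℝ)-1) = (x^2/2)^(m-1) * (x^2/2)^(j:ℕ) := by
    rw [← Real.rpow_natCast (x^2/2) j, ← Real.rpow_add (by positivity : (0:ℝ) < x^2/2)]
    congr 1
    ring
  have h5 : Real.exp (-(a^2+x^2)/2) = Real.exp (-(a^2/2)) * Real.exp (-(x^2/2)) := by
    rw [← Real.exp_add]
    congr 1
    ring
  have h6 : x ^ m * (a*x/2)^(m-1) = a^(m-1) * (x * (x^2/2)^(m-1)) := by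
    have e1 : x ^ m = x * x^(m-1) := by
      conv_lhs => rw [show m = 1 + (m-1) by ring]
      rw [Real.rpow_add hx0, Real.rpow_one]
    have e2 : (a*x/2 : ℝ) = a * (x/2) := by ring
    rw [e1, e2, Real.mul_rpow ha.le (by positivity)]
    rw [show x * x^(m-1) * (a^(m-1) * (x/2)^(m-1)) =
      a^(m-1) * (x * (x^(m-1) * (x/2)^(m-1))) by ring]
    rw [← Real.mul_rpow hx0.le (by positivity)]
    congr 2
    ring
  rw [mqTerm, h4, h5]
  rw [show a * x / 2 = a*x/2 by ring] at h3 ⊢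
  rw [show ((2 * (j:ℕ) :ℝ) + (m-1)) = 2*(j:ℝ)+(m-1) by push_cast; ring] at *
  rw [h3, h1]
  have hfac : (j.factorial : ℝ) ≠ 0 := by positivity
  have ha' : a^(m-1) ≠ 0 := (Real.rpow_pos_of_pos ha _).ne'
  have hnpow : (a*x/2)^(2*j : ℕ) = (a^2/2)^j * (x^2/2)^j := by
    rw [pow_mul, show (a*x/2)^2 = (a^2/2) * (x^2/2) by ring, mul_pow]
  rw [hnpow]
  calc x ^ m / a ^ (m - 1) * (Real.exp (-(a ^ 2 / 2)) * Real.exp (-(x ^ 2 / 2))) *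
      ((a ^ 2 / 2) ^ j * (x ^ 2 / 2) ^ j * (a * x / 2) ^ (m - 1) * (Real.Gamma (m + ↑j))⁻¹ / ↑j.factorial)
      = (x ^ m * (a*x/2)^(m-1)) * (Real.exp (-(a^2/2)) * Real.exp (-(x^2/2)) * (a^2/2)^j
        * (x^2/2)^j * (Real.Gamma (m+(j:ℝ)))⁻¹ / j.factorial) / a^(m-1) := by ring
    _ = (a^(m-1) * (x * (x^2/2)^(m-1))) * (Real.exp (-(a^2/2)) * Real.exp (-(x^2/2)) * (a^2/2)^j
        * (x^2/2)^j * (Real.Gamma (m+(j:ℝ)))⁻¹ / j.factorial) / a^(m-1) := by rw [h6]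
    _ = Real.exp (-(a ^ 2 / 2)) * (a ^ 2 / 2) ^ j * (Real.Gamma (m + ↑j))⁻¹ / ↑j.factorial *
      (x * ((x ^ 2 / 2) ^ (m - 1) * (x ^ 2 / 2) ^ j * Real.exp (-(x ^ 2 / 2)))) := by
        rw [show (a^(m-1) * (x * (x^2/2)^(m-1))) * (Real.exp (-(a^2/2)) * Real.exp (-(x^2/2)) * (a^2/2)^j
          * (x^2/2)^j * (Real.Gamma (m+(j:ℝ)))⁻¹ / j.factorial) / a^(m-1)
          = (x * (x^2/2)^(m-1)) * (Real.exp (-(a^2/2)) * Real.exp (-(x^2/2)) * (a^2/2)^j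
          * (x^2/2)^j * (Real.Gamma (m+(j:ℝ)))⁻¹ / j.factorial) * (a^(m-1) / a^(m-1)) by ring]
        rw [div_self ha']
        ring

lemma iup_nonneg {s u : ℝ} (hu : 0 < u) : 0 ≤ Iup s u :=
  setIntegral_nonneg measurableSet_Ioi fun x hx => by
    have : 0 < x := lt_trans hu hx
    positivity

lemma iup_le_gamma {s u : ℝ} (hs : 0 < s) (hu : 0 < u) : Iup s u ≤ Real.Gamma s := by
  have h := gamma_split hs hu
  have h2 : 0 ≤ Ilo s u := ilo_nonneg
  linarith

lemma mqTerm_integrable {m a b : ℝ} (hb : 0 < b) (j : ℕ) :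
    IntegrableOn (mqTerm m a j) (Set.Ioi b) := by
  have hu : 0 < b^2/2 := by positivity
  have hint := subst_integrable hb (fun t => t ^ (m+(j:ℝ)-1) * Real.exp (-t))
    (by
      have := iup_integrable hu (m+(j:ℝ))
      exact this)
  exact hint.const_mul _

lemma mqTerm_integral {m a b : ℝ} (hb : 0 < b) (j : ℕ) :
    ∫ x in Set.Ioi b, mqTerm m a j x
      = (Real.exp (-(a^2/2)) * (a^2/2)^j * (Real.Gamma (m+j))⁻¹ / j.factorial)
        * Iup (m+(j:ℝ)) (b^2/2) := by
  simp only [mqTerm]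
  rw [integral_const_mul]
  congr 1
  rw [Iup, subst_integral hb (fun t => t ^ (m+(j:ℝ)-1) * Real.exp (-t))]

lemma mqTerm_norm_integral {m a b : ℝ} (hb : 0 < b) (j : ℕ) :
    ∫ x in Set.Ioi b, ‖mqTerm m a j x‖
      = |Real.exp (-(a^2/2)) * (a^2/2)^j * (Real.Gamma (m+j))⁻¹ / (j.factorial : ℝ)|
        * Iup (m+(j:ℝ)) (b^2/2) := by
  have h : ∀ x ∈ Set.Ioi b, ‖mqTerm m a j x‖
      = |Real.exp (-(a^2/2)) * (a^2/2)^j * (Real.Gamma (m+j))⁻¹ / (j.factorial : ℝ)|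
        * (x * ((x^2/2)^(m+(j:ℝ)-1) * Real.exp (-(x^2/2)))) := by
    intro x hx
    have hx0 : 0 < x := lt_trans hb hx
    rw [mqTerm, norm_mul, Real.norm_eq_abs, Real.norm_of_nonneg (by positivity)]
  rw [setIntegral_congr_fun measurableSet_Ioi h, integral_const_mul]
  congr 1
  rw [Iup, subst_integral hb (fun t => t ^ (m+(j:ℝ)-1) * Real.exp (-t))]

lemma mqTerm_norm_summable {m a b : ℝ} (hb : 0 < b) :
    Summable (fun j : ℕ => ∫ x in Set.Ioi b, ‖mqTerm m a j x‖) := by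
  have hu : 0 < b^2/2 := by positivity
  set N : ℕ := ⌈|m|⌉₊ + 1 with hN
  rw [← summable_nat_add_iff N]
  have hbound : ∀ j : ℕ, ∫ x in Set.Ioi b, ‖mqTerm m a (j+N) x‖
      ≤ (Real.exp (-(a^2/2)) * (a^2/2)^N) * ((a^2/2)^j / j.factorial) := by
    intro j
    have hmN : (1:ℝ) ≤ m + (j + N : ℕ) := by
      have h1 := Nat.le_ceil |m|
      have h2 := neg_le_abs m
      push_cast [hN]
      linarith
    have hg : 0 < Real.Gamma (m + ((j+N : ℕ) : ℝ)) := Real.Gamma_pos_of_pos (by linarith)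
    rw [mqTerm_norm_integral hb]
    have habs : |Real.exp (-(a^2/2)) * (a^2/2)^(j+N) * (Real.Gamma (m+((j+N:ℕ):ℝ)))⁻¹
        / ((j+N).factorial : ℝ)| = Real.exp (-(a^2/2)) * (a^2/2)^(j+N)
          * (Real.Gamma (m+((j+N:ℕ):ℝ)))⁻¹ / ((j+N).factorial : ℝ) := by
      apply abs_of_nonneg
      have : 0 ≤ (Real.Gamma (m+((j+N:ℕ):ℝ)))⁻¹ := inv_nonneg.mpr hg.le
      positivity
    rw [habs]
    have hIup : Iup (m+((j+N:ℕ):ℝ)) (b^2/2) ≤ Real.Gamma (m+((j+N:ℕ):ℝ)) :=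
      iup_le_gamma (by linarith) hu
    calc Real.exp (-(a^2/2)) * (a^2/2)^(j+N) * (Real.Gamma (m+((j+N:ℕ):ℝ)))⁻¹
          / ((j+N).factorial : ℝ) * Iup (m+((j+N:ℕ):ℝ)) (b^2/2)
        ≤ Real.exp (-(a^2/2)) * (a^2/2)^(j+N) * (Real.Gamma (m+((j+N:ℕ):ℝ)))⁻¹
          / ((j+N).factorial : ℝ) * Real.Gamma (m+((j+N:ℕ):ℝ)) := by
          apply mul_le_mul_of_nonneg_left hIup
          have : 0 ≤ (Real.Gamma (m+((j+N:ℕ):ℝ)))⁻¹ := inv_nonneg.mpr hg.le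
          positivity
      _ = Real.exp (-(a^2/2)) * (a^2/2)^(j+N) / ((j+N).factorial : ℝ)
          * ((Real.Gamma (m+((j+N:ℕ):ℝ)))⁻¹ * Real.Gamma (m+((j+N:ℕ):ℝ))) := by ring
      _ = Real.exp (-(a^2/2)) * (a^2/2)^(j+N) / ((j+N).factorial : ℝ) := by
          rw [inv_mul_cancel₀ hg.ne']; ring
      _ ≤ (Real.exp (-(a^2/2)) * (a^2/2)^N) * ((a^2/2)^j / j.factorial) := by
          rw [pow_add]
          have hfle : (j.factorial : ℝ) ≤ ((j+N).factorial : ℝ) := by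
            exact_mod_cast Nat.factorial_le (Nat.le_add_right j N)
          have hjf : (0:ℝ) < j.factorial := by positivity
          have hjNf : (0:ℝ) < ((j+N).factorial : ℝ) := by positivity
          rw [div_le_iff₀ hjNf]
          have expand : Real.exp (-(a^2/2)) * (a^2/2)^N * ((a^2/2)^j / j.factorial)
              * ((j+N).factorial : ℝ)
              = Real.exp (-(a^2/2)) * ((a^2/2)^j * (a^2/2)^N)
                * (((j+N).factorial : ℝ) / j.factorial) := by ring
          rw [expand]
          have h1 : (1:ℝ) ≤ ((j+N).factorial : ℝ) / j.factorial := by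
            rw [le_div_iff₀ hjf]; linarith
          nth_rewrite 1 [show Real.exp (-(a^2/2)) * ((a^2/2)^j * (a^2/2)^N)
            = Real.exp (-(a^2/2)) * ((a^2/2)^j * (a^2/2)^N) * 1 by ring]
          apply mul_le_mul_of_nonneg_left h1 (by positivity)
  apply Summable.of_nonneg_of_le
    (fun j => integral_nonneg (fun x => norm_nonneg _)) hbound
  exact ((Real.summable_pow_div_factorial (a^2/2)).mul_left _)

lemma marcumQR_eq_tsum {m a b : ℝ} (ha : 0 < a) (hb : 0 < b) :
    marcumQR m a b = ∑' j : ℕ,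
      (Real.exp (-(a^2/2)) * (a^2/2)^j * (Real.Gamma (m+j))⁻¹ / j.factorial)
        * Iup (m+(j:ℝ)) (b^2/2) := by
  rw [marcumQR]
  rw [setIntegral_congr_fun measurableSet_Ioi (fun x hx => integrand_eq_tsum ha hb hx)]
  rw [← MeasureTheory.integral_tsum_of_summable_integral_norm
    (fun j => mqTerm_integrable hb j) (mqTerm_norm_summable hb)]
  exact tsum_congr fun j => mqTerm_integral hb j

lemma exp_tsum (x : ℝ) : ∑' n : ℕ, x ^ n / n.factorial = Real.exp x := by
  rw [Real.exp_eq_exp_ℝ, NormedSpace.exp_eq_tsum_div]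

lemma g_abs_le {m : ℝ} {z u C D : ℝ} (hz : 0 ≤ z) (hu : 0 ≤ u) (hC : 0 ≤ C) (hD : 1 ≤ D)
    (hCD : ∀ n : ℕ, |(Real.Gamma (m + 1 + n))⁻¹| ≤ C * D ^ n / n.factorial) (j k : ℕ) :
    |(z^j / j.factorial) * (u^k * (Real.Gamma (m+1+j+k))⁻¹)|
      ≤ ((z*D)^j/j.factorial) * (C * ((u*D)^k / k.factorial)) := by
  have hD0 : (0:ℝ) < D := lt_of_lt_of_le one_pos hD
  have harg : m + 1 + (j:ℝ) + (k:ℝ) = m + 1 + ((j+k : ℕ) : ℝ) := by push_cast; ring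
  have h2 := hCD (j+k)
  rw [← harg] at h2
  have habs : |(z^j / j.factorial) * (u^k * (Real.Gamma (m+1+(j:ℝ)+(k:ℝ)))⁻¹)|
      = (z^j / j.factorial) * (u^k * |(Real.Gamma (m+1+(j:ℝ)+(k:ℝ)))⁻¹|) := by
    rw [abs_mul, abs_mul]
    rw [abs_of_nonneg (by positivity : (0:ℝ) ≤ z^j / j.factorial),
        abs_of_nonneg (by positivity : (0:ℝ) ≤ u^k)]
  rw [habs]
  have hfle : (k.factorial : ℝ) ≤ ((j+k).factorial : ℝ) := by
    exact_mod_cast Nat.factorial_le (Nat.le_add_left k j)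
  calc (z^j / j.factorial) * (u^k * |(Real.Gamma (m+1+(j:ℝ)+(k:ℝ)))⁻¹|)
      ≤ (z^j / j.factorial) * (u^k * (C * D^(j+k)/(j+k).factorial)) := by
        apply mul_le_mul_of_nonneg_left _ (by positivity)
        exact mul_le_mul_of_nonneg_left h2 (by positivity)
    _ ≤ (z^j / j.factorial) * (u^k * (C * D^(j+k)/(k.factorial))) := by
        apply mul_le_mul_of_nonneg_left _ (by positivity)
        apply mul_le_mul_of_nonneg_left _ (by positivity)
        apply div_le_div_of_nonneg_left (by positivity) (by positivity) hfle
    _ = ((z*D)^j/j.factorial) * (C * ((u*D)^k / k.factorial)) := by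
        rw [mul_pow, mul_pow, pow_add]
        ring

lemma g_summable {m z u : ℝ} (hz : 0 ≤ z) (hu : 0 ≤ u) :
    Summable (Function.uncurry (fun j k : ℕ =>
      (z^j / j.factorial) * (u^k * (Real.Gamma (m+1+j+k))⁻¹))) := by
  obtain ⟨C, D, hC0, hD1, hCD⟩ := gammaInv_bound (m + 1)
  have hD0 : (0:ℝ) < D := lt_of_lt_of_le one_pos hD1
  have hsum : Summable (fun p : ℕ × ℕ =>
      ((z*D)^p.1/p.1.factorial) * (C * ((u*D)^p.2 / p.2.factorial))) :=
    Summable.mul_of_nonneg (Real.summable_pow_div_factorial (z*D))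
      ((Real.summable_pow_div_factorial (u*D)).mul_left C)
      (fun j => by positivity) (fun k => by positivity)
  apply Summable.of_norm_bounded hsum
  intro p
  exact g_abs_le hz hu hC0 hD1 hCD p.1 p.2

lemma G_eq (m z u : ℝ) (j : ℕ) : (z^j/j.factorial) * Tg (m+(j:ℝ)) u
    = ∑' k : ℕ, (z^j / j.factorial) * (u^k * (Real.Gamma (m+1+j+k))⁻¹) := by
  rw [Tg, ← tsum_mul_left]
  apply tsum_congr
  intro k
  have : m+(j:ℝ)+1+(k:ℝ) = m+1+j+k := by ring
  rw [this]

lemma G_summable {m z u : ℝ} (hz : 0 ≤ z) (hu : 0 ≤ u) :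
    Summable (fun j : ℕ => (z^j/j.factorial) * Tg (m+(j:ℝ)) u) := by
  obtain ⟨C, D, hC0, hD1, hCD⟩ := gammaInv_bound (m + 1)
  have hD0 : (0:ℝ) < D := lt_of_lt_of_le one_pos hD1
  have hgsum := g_summable (m := m) hz hu
  set Ecst : ℝ := ∑' k : ℕ, (u*D)^k / k.factorial with hE
  have hEsum : Summable (fun k : ℕ => (u*D)^k / k.factorial) :=
    Real.summable_pow_div_factorial (u*D)
  have hEnn : 0 ≤ Ecst := tsum_nonneg (fun k => by positivity)
  have hbig : Summable (fun j : ℕ => ((z*D)^j/j.factorial) * (C * Ecst)) :=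
    (Real.summable_pow_div_factorial (z*D)).mul_right _
  apply Summable.of_norm_bounded hbig
  intro j
  rw [G_eq m z u j]
  have hrow : Summable (fun k : ℕ => (z^j / j.factorial) * (u^k * (Real.Gamma (m+1+j+k))⁻¹)) :=
    hgsum.prod_factor j
  have hrown : Summable (fun k : ℕ => ‖(z^j / j.factorial) * (u^k * (Real.Gamma (m+1+j+k))⁻¹)‖) :=
    hrow.abs
  have hboundrow : Summable (fun k : ℕ => ((z*D)^j/j.factorial) * (C * ((u*D)^k / k.factorial))) :=
    (hEsum.mul_left C).mul_left _
  calc ‖∑' k : ℕ, (z^j / j.factorial) * (u^k * (Real.Gamma (m+1+j+k))⁻¹)‖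
      ≤ ∑' k : ℕ, ‖(z^j / j.factorial) * (u^k * (Real.Gamma (m+1+j+k))⁻¹)‖ :=
        norm_tsum_le_tsum_norm hrown
    _ ≤ ∑' k : ℕ, ((z*D)^j/j.factorial) * (C * ((u*D)^k / k.factorial)) := by
        apply Summable.tsum_le_tsum _ hrown hboundrow
        intro k
        rw [Real.norm_eq_abs]
        exact g_abs_le hz hu hC0 hD1 hCD j k
    _ = ((z*D)^j/j.factorial) * (C * Ecst) := by
        rw [tsum_mul_left, tsum_mul_left]

lemma phi3_eq {m u z : ℝ} (hu : 0 ≤ u) (hz : 0 ≤ z) :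
    Phi3 1 (m+1) u z = ∑' j : ℕ, (z^j/j.factorial) * Tg (m+(j:ℝ)) u := by
  rw [Phi3]
  have h1 : ∀ k i : ℕ, phi3Term 1 (m+1) u z k i
      = (z^i/i.factorial) * (u^k * (Real.Gamma (m+1+i+k))⁻¹) := by
    intro k i
    rw [phi3Term, ascPochhammer_eval_one]
    have harg : m+1+(k:ℝ)+(i:ℝ) = m+1+i+k := by ring
    rw [harg]
    have hfac : (k.factorial : ℝ) ≠ 0 := by positivity
    have hfac2 : (i.factorial : ℝ) ≠ 0 := by positivity
    linear_combination (u^k * z^i * (Real.Gamma (m+1+(i:ℝ)+(k:ℝ)))⁻¹ * ((i.factorial:ℝ))⁻¹)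
      * (mul_inv_cancel₀ hfac)
  calc ∑' k : ℕ, ∑' i : ℕ, phi3Term 1 (m+1) u z k i
      = ∑' k : ℕ, ∑' i : ℕ, (z^i/i.factorial) * (u^k * (Real.Gamma (m+1+i+k))⁻¹) := by
        apply tsum_congr; intro k; apply tsum_congr; intro i; exact h1 k i
    _ = ∑' i : ℕ, ∑' k : ℕ, (z^i/i.factorial) * (u^k * (Real.Gamma (m+1+i+k))⁻¹) :=
        Summable.tsum_comm (g_summable hz hu)
    _ = ∑' j : ℕ, (z^j/j.factorial) * Tg (m+(j:ℝ)) u := by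
        apply tsum_congr; intro j; exact (G_eq m z u j).symm

/-- Q_m(a,b) = 1 − (b²/2)^m e^{−(a²+b²)/2} Φ̃₃(1,m+1;b²/2,a²b²/4), real m. -/
theorem marcumQR_phi3 (m a b : ℝ) (ha : 0 < a) (hb : 0 < b) :
    marcumQR m a b =
      1 - (b ^ 2 / 2) ^ m * Real.exp (-(a ^ 2 + b ^ 2) / 2) *
        Phi3 1 (m + 1) (b ^ 2 / 2) (a ^ 2 * b ^ 2 / 4) := by
  have hu : (0:ℝ) < b^2/2 := by positivity
  have hv0 : (0:ℝ) ≤ a^2/2 := by positivity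
  have hz0 : (0:ℝ) ≤ a^2*b^2/4 := by positivity
  have hp : ∀ j : ℕ, ((a^2/2 : ℝ))^j * ((b^2/2))^j = (a^2*b^2/4)^j := by
    intro j
    rw [← mul_pow]
    congr 1
    ring
  rw [marcumQR_eq_tsum ha hb]
  have hterm : ∀ j : ℕ,
      (Real.exp (-(a^2/2)) * (a^2/2)^j * (Real.Gamma (m+j))⁻¹ / j.factorial)
        * Iup (m+(j:ℝ)) (b^2/2)
      = (Real.exp (-(a^2/2)) * (a^2/2)^j / j.factorial)
        - ((b^2/2)^m * Real.exp (-(b^2/2)) * Real.exp (-(a^2/2)))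
          * (((a^2*b^2/4)^j / j.factorial) * Tg (m+(j:ℝ)) (b^2/2)) := by
    intro j
    have h := gamma_inv_iup hu (m+(j:ℝ))
    have hupow : (b^2/2:ℝ) ^ (m+(j:ℝ)) = (b^2/2)^m * (b^2/2)^(j:ℕ) := by
      rw [Real.rpow_add hu, Real.rpow_natCast]
    rw [hupow] at h
    calc (Real.exp (-(a^2/2)) * (a^2/2)^j * (Real.Gamma (m+j))⁻¹ / j.factorial)
          * Iup (m+(j:ℝ)) (b^2/2)
        = (Real.exp (-(a^2/2)) * (a^2/2)^j / j.factorial)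
          * ((Real.Gamma (m+(j:ℝ)))⁻¹ * Iup (m+(j:ℝ)) (b^2/2)) := by ring
      _ = (Real.exp (-(a^2/2)) * (a^2/2)^j / j.factorial)
          * (1 - (b^2/2)^m * (b^2/2)^(j:ℕ) * Real.exp (-(b^2/2)) * Tg (m+(j:ℝ)) (b^2/2)) := by
          rw [h]
      _ = (Real.exp (-(a^2/2)) * (a^2/2)^j / j.factorial)
        - ((b^2/2)^m * Real.exp (-(b^2/2)) * Real.exp (-(a^2/2)))
          * ((((a^2/2))^j * ((b^2/2))^j / j.factorial) * Tg (m+(j:ℝ)) (b^2/2)) := by ring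
      _ = (Real.exp (-(a^2/2)) * (a^2/2)^j / j.factorial)
        - ((b^2/2)^m * Real.exp (-(b^2/2)) * Real.exp (-(a^2/2)))
          * (((a^2*b^2/4)^j / j.factorial) * Tg (m+(j:ℝ)) (b^2/2)) := by rw [hp j]
  rw [tsum_congr hterm]
  have hs1 : Summable (fun j : ℕ => Real.exp (-(a^2/2)) * (a^2/2)^j / j.factorial) := by
    have h := (Real.summable_pow_div_factorial (a^2/2)).mul_left (Real.exp (-(a^2/2)))
    apply h.congr
    intro j
    rw [mul_div_assoc]
  have hsG : Summable (fun j : ℕ => ((a^2*b^2/4)^j/(j.factorial : ℝ)) * Tg (m+(j:ℝ)) (b^2/2)) :=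
    G_summable hz0 hu.le
  have hs2 : Summable (fun j : ℕ => ((b^2/2)^m * Real.exp (-(b^2/2)) * Real.exp (-(a^2/2)))
      * (((a^2*b^2/4)^j / (j.factorial : ℝ)) * Tg (m+(j:ℝ)) (b^2/2))) :=
    hsG.mul_left _
  rw [Summable.tsum_sub hs1 hs2, tsum_mul_left]
  have h1 : ∑' j : ℕ, Real.exp (-(a^2/2)) * (a^2/2)^j / j.factorial = 1 := by
    calc ∑' j : ℕ, Real.exp (-(a^2/2)) * (a^2/2)^j / j.factorial
        = ∑' j : ℕ, Real.exp (-(a^2/2)) * ((a^2/2)^j / j.factorial) := by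
          apply tsum_congr; intro j; rw [mul_div_assoc]
      _ = Real.exp (-(a^2/2)) * ∑' j : ℕ, (a^2/2)^j / (j.factorial : ℝ) := tsum_mul_left
      _ = Real.exp (-(a^2/2)) * Real.exp (a^2/2) := by rw [exp_tsum]
      _ = 1 := by rw [← Real.exp_add]; simp
  rw [h1]
  congr 1
  rw [← phi3_eq hu.le hz0]
  have hexp : Real.exp (-(a^2+b^2)/2) = Real.exp (-(b^2/2)) * Real.exp (-(a^2/2)) := by
    rw [← Real.exp_add]
    congr 1
    ring
  rw [hexp]
  ring
end
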